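/- arXiv:1704.02881 — 8 statements merged into one kernel-verified Lean document; each statement's English description precedes it below -/
import Mathlib

section
/- For any q, n ∈ ℕ, the unitary Ramanujan sum satisfies c*_q(n) = Σ_{d ∣∣ (n,q)_*} d · μ*(q/d), where μ*(m) = (−1)^{ω(m)}. -/
open Complex Finset

noncomputable section

/-- Number of distinct prime factors. -/
def omega (n : ℕ) : ℕ := n.primeFactors.card

/-- The unitary gcd `(k,q)_* = max {d : d ∣ k, d ∣∣ q}`. -/
def ugcd (k q : ℕ) : ℕ :=
  ((q.divisors).filter (fun d => d ∣ k ∧ Nat.Coprime d (q / d))).sup id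

/-- The set of unitary divisors of `q`. -/
def unitaryDivisors (q : ℕ) : Finset ℕ :=
  q.divisors.filter (fun d => Nat.Coprime d (q / d))

/-- The unitary Ramanujan sum `c*_q(n)`. -/
def cstar (q n : ℕ) : ℂ :=
  ∑ k ∈ Finset.Icc 1 q,
    if ugcd k q = 1 then Complex.exp (2 * Real.pi * Complex.I * k * n / q) else 0

/-- The classical Ramanujan sum `c_q(n)`. -/
def cc (q n : ℕ) : ℂ :=
  ∑ k ∈ Finset.Icc 1 q,
    if Nat.gcd k q = 1 then Complex.exp (2 * Real.pi * Complex.I * k * n / q) else 0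

/-- The unitary Möbius function `μ*(m) = (-1)^{ω(m)}`. -/
def mustar (m : ℕ) : ℤ := (-1) ^ omega m

/-- the filter set used for ugcd -/
def uset (k q : ℕ) : Finset ℕ :=
  (q.divisors).filter (fun d => d ∣ k ∧ Nat.Coprime d (q / d))

lemma mem_uset {d k q : ℕ} (hq : q ≠ 0) :
    d ∈ uset k q ↔ d ∣ q ∧ d ∣ k ∧ Nat.Coprime d (q / d) := by
  simp [uset, Nat.mem_divisors, hq, and_assoc]

lemma udiv_mul_div {d g q : ℕ} (hdg : d ∣ g) (hgq : g ∣ q) (hg : g ≠ 0) :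
    g / d * (q / g) = q / d := by
  obtain ⟨a, rfl⟩ := hdg
  obtain ⟨b, rfl⟩ := hgq
  have hd : d ≠ 0 := by rintro rfl; exact hg (by simp)
  have ha : a ≠ 0 := by rintro rfl; exact hg (by simp)
  rw [Nat.mul_div_cancel_left _ (Nat.pos_of_ne_zero hd),
    Nat.mul_div_cancel_left _ (Nat.pos_of_ne_zero hg), mul_assoc,
    Nat.mul_div_cancel_left _ (Nat.pos_of_ne_zero hd)]

lemma div_dvd_div_left' {d g q : ℕ} (hdg : d ∣ g) (hgq : g ∣ q) (hg : g ≠ 0) :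
    g / d ∣ q / d :=
  ⟨q / g, (udiv_mul_div hdg hgq hg).symm⟩

lemma div_dvd_div_right' {d g q : ℕ} (hdg : d ∣ g) (hgq : g ∣ q) (hg : g ≠ 0) :
    q / g ∣ q / d :=
  ⟨g / d, by rw [mul_comm]; exact (udiv_mul_div hdg hgq hg).symm⟩

lemma lcm_mem_uset {k q : ℕ} (hq : q ≠ 0) : (uset k q).lcm id ∈ uset k q := by
  set L := (uset k q).lcm id with hL
  have hLq : L ∣ q := Finset.lcm_dvd fun d hd => ((mem_uset hq).1 hd).1
  have hLk : L ∣ k := Finset.lcm_dvd fun d hd => ((mem_uset hq).1 hd).2.1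
  have hL0 : L ≠ 0 := fun h => hq (by simpa [h] using hLq)
  refine (mem_uset hq).2 ⟨hLq, hLk, ?_⟩
  rw [Nat.coprime_iff_gcd_eq_one]
  by_contra h
  obtain ⟨p, hp, hpdvd⟩ := Nat.exists_prime_and_dvd h
  have hpL : p ∣ L := hpdvd.trans (Nat.gcd_dvd_left _ _)
  have hpqL : p ∣ q / L := hpdvd.trans (Nat.gcd_dvd_right _ _)
  have hLprod : L ∣ ∏ d ∈ uset k q, d :=
    Finset.lcm_dvd fun d hd => Finset.dvd_prod_of_mem id hd
  obtain ⟨d, hd, hpd⟩ := hp.prime.exists_mem_finset_dvd (hpL.trans hLprod)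
  obtain ⟨hdq, hdk, hdcop⟩ := (mem_uset hq).1 hd
  have hdL : d ∣ L := Finset.dvd_lcm hd
  have : p ∣ q / d := hpqL.trans (div_dvd_div_right' hdL hLq hL0)
  exact hp.one_lt.ne' (Nat.eq_one_of_dvd_one (hdcop ▸ Nat.dvd_gcd hpd this))

lemma ugcd_eq_lcm {k q : ℕ} (hq : q ≠ 0) : ugcd k q = (uset k q).lcm id := by
  have hmem := lcm_mem_uset (k := k) hq
  have hLq : (uset k q).lcm id ∣ q := Finset.lcm_dvd fun d hd => ((mem_uset hq).1 hd).1
  have hL0 : (uset k q).lcm id ≠ 0 := fun h => hq (by simpa [h] using hLq)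
  refine le_antisymm (Finset.sup_le fun d hd => ?_) (Finset.le_sup (f := id) hmem)
  exact Nat.le_of_dvd (Nat.pos_of_ne_zero hL0) (Finset.dvd_lcm hd)

lemma ugcd_mem_uset {k q : ℕ} (hq : q ≠ 0) : ugcd k q ∈ uset k q := by
  rw [ugcd_eq_lcm hq]; exact lcm_mem_uset hq

lemma dvd_ugcd {d k q : ℕ} (hq : q ≠ 0) (hd : d ∈ uset k q) : d ∣ ugcd k q := by
  rw [ugcd_eq_lcm hq]; exact Finset.dvd_lcm hd

lemma ugcd_ne_zero {k q : ℕ} (hq : q ≠ 0) : ugcd k q ≠ 0 := by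
  intro h
  have := ((mem_uset hq).1 (ugcd_mem_uset (k := k) hq)).1
  rw [h] at this
  exact hq (Nat.eq_zero_of_zero_dvd this)

lemma unitaryDivisors_ugcd {k q : ℕ} (hq : q ≠ 0) :
    unitaryDivisors (ugcd k q) = uset k q := by
  set g := ugcd k q with hgdef
  have hg0 : g ≠ 0 := ugcd_ne_zero hq
  obtain ⟨hgq, hgk, hgcop⟩ := (mem_uset hq).1 (ugcd_mem_uset (k := k) hq)
  ext d
  simp only [unitaryDivisors, Finset.mem_filter, Nat.mem_divisors, mem_uset hq]
  constructor
  · rintro ⟨⟨hdg, -⟩, hdcop⟩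
    refine ⟨hdg.trans hgq, hdg.trans hgk, ?_⟩
    rw [← udiv_mul_div hdg hgq hg0]
    exact Nat.Coprime.mul_right hdcop (hgcop.coprime_dvd_left hdg)
  · intro h
    have hdg : d ∣ g := dvd_ugcd hq ((mem_uset hq).2 h)
    exact ⟨⟨hdg, hg0⟩, h.2.2.coprime_dvd_right (div_dvd_div_left' hdg hgq hg0)⟩

def uphi (m : ℕ) (S : Finset ℕ) : ℕ := ∏ p ∈ S, p ^ m.factorization p

lemma prod_full {m : ℕ} (hm : m ≠ 0) : uphi m m.primeFactors = m := by
  rw [uphi, ← Nat.support_factorization]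
  exact Nat.factorization_prod_pow_eq_self hm

lemma uphi_ne_zero {m : ℕ} {S : Finset ℕ} (hS : S ⊆ m.primeFactors) : uphi m S ≠ 0 :=
  Finset.prod_ne_zero_iff.2 fun p hp =>
    pow_ne_zero _ (Nat.prime_of_mem_primeFactors (hS hp)).ne_zero

lemma uphi_primeFactors {m : ℕ} {S : Finset ℕ} (hS : S ⊆ m.primeFactors) :
    (uphi m S).primeFactors = S := by
  ext p
  rw [Nat.mem_primeFactors]
  constructor
  · rintro ⟨hp, hdvd, -⟩
    obtain ⟨r, hr, hpr⟩ := hp.prime.exists_mem_finset_dvd hdvd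
    have hrp : r.Prime := Nat.prime_of_mem_primeFactors (hS hr)
    rwa [(Nat.prime_dvd_prime_iff_eq hp hrp).1 (hp.dvd_of_dvd_pow hpr)]
  · intro hp
    have hpp : p.Prime := Nat.prime_of_mem_primeFactors (hS hp)
    have he : m.factorization p ≠ 0 := by
      have := hS hp
      rwa [← Nat.support_factorization, Finsupp.mem_support_iff] at this
    exact ⟨hpp, (dvd_pow_self p he).trans (Finset.dvd_prod_of_mem _ hp), uphi_ne_zero hS⟩

lemma uphi_mem {m : ℕ} (hm : m ≠ 0) {S : Finset ℕ} (hS : S ⊆ m.primeFactors) :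
    uphi m S ∈ unitaryDivisors m := by
  have hdvd : uphi m S ∣ m := by
    conv_rhs => rw [← prod_full hm]
    rw [uphi, uphi]
    exact Finset.prod_dvd_prod_of_subset S m.primeFactors (fun p => p ^ m.factorization p) hS
  have hsplit : uphi m S * uphi m (m.primeFactors \ S) = m := by
    rw [uphi, uphi, ← Finset.prod_union disjoint_sdiff,
      Finset.union_sdiff_of_subset hS]
    exact prod_full hm
  have hdiv : m / uphi m S = uphi m (m.primeFactors \ S) :=
    Nat.div_eq_of_eq_mul_left (Nat.pos_of_ne_zero (uphi_ne_zero hS))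
      (by rw [mul_comm]; exact hsplit.symm)
  rw [unitaryDivisors, Finset.mem_filter, Nat.mem_divisors, hdiv]
  refine ⟨⟨hdvd, hm⟩, ?_⟩
  rw [uphi, uphi, Nat.coprime_prod_left_iff]
  intro p hp
  rw [Nat.coprime_prod_right_iff]
  intro r hr
  have hpr : p ≠ r := fun h => (Finset.mem_sdiff.1 hr).2 (h ▸ hp)
  exact Nat.Coprime.pow _ _ ((Nat.coprime_primes (Nat.prime_of_mem_primeFactors (hS hp))
    (Nat.prime_of_mem_primeFactors (Finset.mem_sdiff.1 hr).1)).2 hpr)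

lemma uphi_of_mem {m d : ℕ} (hm : m ≠ 0) (hd : d ∈ unitaryDivisors m) :
    uphi m d.primeFactors = d := by
  rw [unitaryDivisors, Finset.mem_filter, Nat.mem_divisors] at hd
  obtain ⟨⟨hdvd, -⟩, hcop⟩ := hd
  have hd0 : d ≠ 0 := fun h => hm (Nat.eq_zero_of_zero_dvd (h ▸ hdvd))
  have hmd0 : m / d ≠ 0 := fun h => by
    have := Nat.div_mul_cancel hdvd
    rw [h, zero_mul] at this; exact hm this.symm
  have key : ∀ p ∈ d.primeFactors, m.factorization p = d.factorization p := by
    intro p hp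
    have hmul : d * (m / d) = m := Nat.mul_div_cancel' hdvd
    have h2 := Nat.factorization_mul hd0 hmd0
    rw [hmul] at h2
    have hnd : ¬ p ∣ m / d := by
      intro hpmd
      have hp' := Nat.mem_primeFactors.1 hp
      exact hp'.1.one_lt.ne'
        (Nat.eq_one_of_dvd_one (hcop ▸ Nat.dvd_gcd hp'.2.1 hpmd))
    rw [h2, Finsupp.add_apply, Nat.factorization_eq_zero_of_not_dvd hnd, add_zero]
  rw [uphi]
  calc ∏ p ∈ d.primeFactors, p ^ m.factorization p
      = ∏ p ∈ d.primeFactors, p ^ d.factorization p :=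
        Finset.prod_congr rfl fun p hp => by rw [key p hp]
    _ = d := prod_full hd0

lemma sum_mustar {m : ℕ} (hm : m ≠ 0) :
    ∑ d ∈ unitaryDivisors m, (mustar d : ℤ) = if m = 1 then 1 else 0 := by
  have := Finset.sum_bij' (s := unitaryDivisors m) (t := m.primeFactors.powerset)
    (f := fun d => (mustar d : ℤ)) (g := fun S => (-1 : ℤ) ^ S.card)
    (fun d _ => d.primeFactors) (fun S _ => uphi m S)
    (fun d hd => by
      rw [Finset.mem_powerset]
      have hdvd := (Nat.mem_divisors.1 (Finset.mem_filter.1 hd).1).1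
      exact Nat.primeFactors_mono hdvd hm)
    (fun S hS => uphi_mem hm (Finset.mem_powerset.1 hS))
    (fun d hd => uphi_of_mem hm hd)
    (fun S hS => uphi_primeFactors (Finset.mem_powerset.1 hS))
    (fun d _ => rfl)
  rw [this, Finset.sum_powerset_neg_one_pow_card]
  simp [Nat.primeFactors_eq_empty, hm]

lemma root_sum (e n : ℕ) (he : e ≠ 0) :
    ∑ m ∈ Finset.Icc 1 e, Complex.exp (2 * Real.pi * Complex.I * m * n / e) =
      if e ∣ n then (e : ℂ) else 0 := by
  have he' : (e : ℂ) ≠ 0 := Nat.cast_ne_zero.2 he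
  set ζ : ℂ := Complex.exp (2 * Real.pi * Complex.I * n / e) with hζ
  have hterm : ∀ m : ℕ, Complex.exp (2 * Real.pi * Complex.I * m * n / e) = ζ ^ m := by
    intro m
    rw [hζ, ← Complex.exp_nat_mul]
    ring_nf
  have hζe : ζ ^ e = 1 := by
    rw [hζ, ← Complex.exp_nat_mul]
    have : (e : ℂ) * (2 * Real.pi * Complex.I * n / e) = n * (2 * Real.pi * Complex.I) := by
      field_simp
    rw [this, Complex.exp_nat_mul, Complex.exp_two_pi_mul_I, one_pow]
  by_cases hdvd : e ∣ n
  · simp only [hdvd, if_true]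
    obtain ⟨t, rfl⟩ := hdvd
    have : ∀ m ∈ Finset.Icc 1 e, Complex.exp (2 * Real.pi * Complex.I * m * (e * t : ℕ) / e) = 1 := by
      intro m _
      have harg : 2 * Real.pi * Complex.I * m * (e * t : ℕ) / e
          = (m * t : ℕ) * (2 * Real.pi * Complex.I) := by
        push_cast; field_simp
      rw [harg, Complex.exp_nat_mul, Complex.exp_two_pi_mul_I, one_pow]
    rw [Finset.sum_congr rfl this]
    simp [Nat.card_Icc]
  · simp only [hdvd, if_false]
    have hζ1 : ζ ≠ 1 := by
      intro h1
      rw [hζ, Complex.exp_eq_one_iff] at h1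
      obtain ⟨k, hk⟩ := h1
      have hIpi : (2 * Real.pi * Complex.I : ℂ) ≠ 0 := by
        simp [Real.pi_ne_zero, Complex.I_ne_zero]
      have : (n : ℂ) = k * e := by
        field_simp at hk
        have h2 : (2:ℂ) * Real.pi * Complex.I * n = 2 * Real.pi * Complex.I * (k * e) := by
          rw [hk]; ring
        exact mul_left_cancel₀ hIpi h2
      have : (n : ℤ) = k * e := by exact_mod_cast this
      exact hdvd (Int.natCast_dvd_natCast.1 ⟨k, by exact_mod_cast this.trans (mul_comm k e)⟩)
    have hsum : ∀ j : ℕ, ∑ m ∈ Finset.Icc 1 j, ζ ^ m = ζ * ∑ m ∈ Finset.range j, ζ ^ m := by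
      intro j
      induction j with
      | zero => simp
      | succ k ih =>
        rw [Finset.sum_Icc_succ_top (by omega), ih, Finset.sum_range_succ]
        ring
    rw [Finset.sum_congr rfl fun m _ => hterm m, hsum e, geom_sum_eq hζ1, hζe]
    simp

theorem stmt1 (q n : ℕ) (hq : 1 ≤ q) (hn : 1 ≤ n) :
    cstar q n = ∑ d ∈ unitaryDivisors (ugcd n q), (d : ℂ) * (mustar (q / d) : ℂ) := by
  have hq0 : q ≠ 0 := by omega
  set E : ℕ → ℂ := fun k => Complex.exp (2 * Real.pi * Complex.I * k * n / q) with hE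
  have huset : ∀ k, uset k q = (unitaryDivisors q).filter (fun d => d ∣ k) := by
    intro k; ext d
    simp only [uset, unitaryDivisors, Finset.mem_filter, Nat.mem_divisors]
    tauto
  have step1 : cstar q n = ∑ k ∈ Finset.Icc 1 q, ∑ d ∈ uset k q, (mustar d : ℂ) * E k := by
    rw [cstar]
    refine Finset.sum_congr rfl fun k hk => ?_
    have hg0 : ugcd k q ≠ 0 := ugcd_ne_zero hq0
    have hcast : (∑ d ∈ unitaryDivisors (ugcd k q), ((mustar d : ℤ) : ℂ))
        = if ugcd k q = 1 then 1 else 0 := by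
      rw [← Int.cast_sum, sum_mustar hg0]
      split <;> simp
    rw [← unitaryDivisors_ugcd (k := k) hq0, ← Finset.sum_mul, hcast]
    split <;> simp [hE]
  have step2 : ∑ k ∈ Finset.Icc 1 q, ∑ d ∈ uset k q, (mustar d : ℂ) * E k
      = ∑ d ∈ unitaryDivisors q, (mustar d : ℂ) *
          ∑ k ∈ (Finset.Icc 1 q).filter (fun k => d ∣ k), E k := by
    simp_rw [huset, Finset.sum_filter]
    rw [Finset.sum_comm]
    refine Finset.sum_congr rfl fun d hd => ?_
    rw [Finset.mul_sum]
    refine Finset.sum_congr rfl fun k hk => ?_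
    split <;> simp
  have step3 : ∀ d ∈ unitaryDivisors q,
      (∑ k ∈ (Finset.Icc 1 q).filter (fun k => d ∣ k), E k)
        = if (q / d) ∣ n then ((q / d : ℕ) : ℂ) else 0 := by
    intro d hd
    obtain ⟨hmem, hcop⟩ := Finset.mem_filter.1 hd
    have hdq : d ∣ q := (Nat.mem_divisors.1 hmem).1
    have hd0 : d ≠ 0 := fun h => hq0 (Nat.eq_zero_of_zero_dvd (h ▸ hdq))
    have he0 : q / d ≠ 0 := Nat.div_ne_zero_iff.2 ⟨hd0, Nat.le_of_dvd (Nat.pos_of_ne_zero hq0) hdq⟩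
    have hqde : d * (q / d) = q := Nat.mul_div_cancel' hdq
    have hreindex : (∑ k ∈ (Finset.Icc 1 q).filter (fun k => d ∣ k), E k)
        = ∑ m ∈ Finset.Icc 1 (q / d), E (d * m) := by
      refine Finset.sum_bij' (fun k _ => k / d) (fun m _ => d * m) ?_ ?_ ?_ ?_ ?_
      · intro k hk
        obtain ⟨hk1, hkd⟩ := Finset.mem_filter.1 hk
        obtain ⟨hk2, hk3⟩ := Finset.mem_Icc.1 hk1
        refine Finset.mem_Icc.2 ⟨?_, Nat.div_le_div_right hk3⟩
        exact Nat.div_pos (Nat.le_of_dvd (by omega) hkd) (Nat.pos_of_ne_zero hd0)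
      · intro m hm
        obtain ⟨hm1, hm2⟩ := Finset.mem_Icc.1 hm
        refine Finset.mem_filter.2 ⟨Finset.mem_Icc.2 ⟨?_, ?_⟩, Dvd.intro m rfl⟩
        · exact Nat.one_le_iff_ne_zero.2 (Nat.mul_ne_zero hd0 (by omega))
        · calc d * m ≤ d * (q / d) := Nat.mul_le_mul_left d hm2
            _ = q := hqde
      · intro k hk
        exact Nat.mul_div_cancel' (Finset.mem_filter.1 hk).2
      · intro m hm
        exact Nat.mul_div_cancel_left m (Nat.pos_of_ne_zero hd0)
      · intro k hk
        rw [Nat.mul_div_cancel' (Finset.mem_filter.1 hk).2]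
    have hterm : ∀ m : ℕ, E (d * m)
        = Complex.exp (2 * Real.pi * Complex.I * m * n / ((q / d : ℕ) : ℂ)) := by
      intro m
      have hqc : (q : ℂ) = (d : ℂ) * ((q / d : ℕ) : ℂ) := by
        exact_mod_cast congrArg (Nat.cast (R := ℂ)) hqde.symm
      have hd0' : (d : ℂ) ≠ 0 := Nat.cast_ne_zero.2 hd0
      have he0' : ((q / d : ℕ) : ℂ) ≠ 0 := Nat.cast_ne_zero.2 he0
      rw [hE]
      push_cast
      rw [hqc]
      field_simp
    rw [hreindex, Finset.sum_congr rfl fun m _ => hterm m]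
    exact root_sum (q / d) n he0
  have hmapud : ∀ d ∈ unitaryDivisors q, q / d ∈ unitaryDivisors q := by
    intro d hd
    obtain ⟨hmem, hcop⟩ := Finset.mem_filter.1 hd
    have hdq : d ∣ q := (Nat.mem_divisors.1 hmem).1
    refine Finset.mem_filter.2 ⟨Nat.mem_divisors.2 ⟨Nat.div_dvd_of_dvd hdq, hq0⟩, ?_⟩
    rw [Nat.div_div_self hdq hq0]
    exact hcop.symm
  have step4 : ∑ d ∈ unitaryDivisors q, (mustar d : ℂ) *
        (if (q / d) ∣ n then ((q / d : ℕ) : ℂ) else 0)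
      = ∑ e ∈ unitaryDivisors q, (mustar (q / e) : ℂ) *
        (if e ∣ n then ((e : ℕ) : ℂ) else 0) := by
    refine Finset.sum_bij' (fun d _ => q / d) (fun e _ => q / e) hmapud hmapud ?_ ?_ ?_
    · intro d hd
      exact Nat.div_div_self (Nat.mem_divisors.1 (Finset.mem_filter.1 hd).1).1 hq0
    · intro e he
      exact Nat.div_div_self (Nat.mem_divisors.1 (Finset.mem_filter.1 he).1).1 hq0
    · intro d hd
      rw [Nat.div_div_self (Nat.mem_divisors.1 (Finset.mem_filter.1 hd).1).1 hq0]
  have step5 : ∑ e ∈ unitaryDivisors q, (mustar (q / e) : ℂ) *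
        (if e ∣ n then ((e : ℕ) : ℂ) else 0)
      = ∑ d ∈ unitaryDivisors (ugcd n q), (d : ℂ) * (mustar (q / d) : ℂ) := by
    simp_rw [mul_ite, mul_zero]
    rw [← Finset.sum_filter]
    have hset : (unitaryDivisors q).filter (fun e => e ∣ n) = unitaryDivisors (ugcd n q) := by
      rw [unitaryDivisors_ugcd hq0, huset n]
    rw [hset]
    exact Finset.sum_congr rfl fun d _ => mul_comm _ _
  have step23 : ∑ d ∈ unitaryDivisors q, (mustar d : ℂ) *
        ∑ k ∈ (Finset.Icc 1 q).filter (fun k => d ∣ k), E k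
      = ∑ d ∈ unitaryDivisors q, (mustar d : ℂ) *
        (if (q / d) ∣ n then ((q / d : ℕ) : ℂ) else 0) :=
    Finset.sum_congr rfl fun d hd => by rw [step3 d hd]
  rw [step1, step2, step23, step4, step5]
end
end

section
/- For any q, n ∈ ℕ, the sum of c*_d(n) over all unitary divisors d of q equals q if q divides n, and equals 0 otherwise. -/
open Complex Finset

noncomputable section

set_option linter.unusedVariables false in
lemma one_mem_s (m q : ℕ) (hq : q ≠ 0) :
    1 ∈ (q.divisors).filter (fun d => d ∣ m ∧ Nat.Coprime d (q / d)) := by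
  simp [Nat.mem_divisors, hq]

lemma ugcd_mem (m q : ℕ) (hq : q ≠ 0) :
    ugcd m q ∈ (q.divisors).filter (fun d => d ∣ m ∧ Nat.Coprime d (q / d)) := by
  obtain ⟨b, hb, hEq⟩ := Finset.exists_mem_eq_sup _ ⟨1, one_mem_s m q hq⟩ id
  unfold ugcd; rw [hEq]; exact hb

lemma le_ugcd {e m q : ℕ} (hq : q ≠ 0) (hem : e ∣ m) (heq : e ∣ q)
    (hco : Nat.Coprime e (q / e)) : e ≤ ugcd m q :=
  Finset.le_sup (f := id) (Finset.mem_filter.mpr ⟨Nat.mem_divisors.mpr ⟨heq, hq⟩, hem, hco⟩)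

lemma ugcd_dvd_left (m q : ℕ) (hq : q ≠ 0) : ugcd m q ∣ m :=
  ((Finset.mem_filter.mp (ugcd_mem m q hq)).2).1

lemma ugcd_dvd_right (m q : ℕ) (hq : q ≠ 0) : ugcd m q ∣ q :=
  (Nat.mem_divisors.mp (Finset.mem_filter.mp (ugcd_mem m q hq)).1).1

lemma ugcd_coprime (m q : ℕ) (hq : q ≠ 0) : Nat.Coprime (ugcd m q) (q / ugcd m q) :=
  ((Finset.mem_filter.mp (ugcd_mem m q hq)).2).2

lemma ugcd_pos (m q : ℕ) (hq : q ≠ 0) : 0 < ugcd m q :=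
  le_ugcd hq (one_dvd _) (one_dvd _) (Nat.coprime_one_left _)

lemma div_dvd_div_nat {e l q : ℕ} (he : e ≠ 0) (hel : e ∣ l) (hlq : l ∣ q) :
    q / l ∣ q / e := by
  obtain ⟨a, rfl⟩ := hel
  obtain ⟨b, rfl⟩ := hlq
  rcases Nat.eq_zero_or_pos a with rfl | ha
  · simp
  have hea : e * a ≠ 0 := by positivity
  rw [Nat.mul_div_cancel_left _ (Nat.pos_of_ne_zero hea), mul_assoc,
    Nat.mul_div_cancel_left _ (Nat.pos_of_ne_zero he)]
  exact Dvd.intro_left a rfl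

lemma dvd_ugcd_s2 {e m q : ℕ} (hq : q ≠ 0) (hem : e ∣ m) (heq : e ∣ q)
    (hco : Nat.Coprime e (q / e)) : e ∣ ugcd m q := by
  set g := ugcd m q with hg
  have hgm := ugcd_dvd_left m q hq
  have hgq := ugcd_dvd_right m q hq
  have hgco := ugcd_coprime m q hq
  set l := Nat.lcm e g with hl
  have hlm : l ∣ m := Nat.lcm_dvd hem hgm
  have hlq : l ∣ q := Nat.lcm_dvd heq hgq
  have hl0 : l ≠ 0 := fun h => hq (Nat.eq_zero_of_zero_dvd (h ▸ hlq))
  have he0 : e ≠ 0 := fun h => hq (Nat.eq_zero_of_zero_dvd (h ▸ heq))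
  have hg0 : g ≠ 0 := (ugcd_pos m q hq).ne'
  have hlco : Nat.Coprime l (q / l) := by
    have h1 : Nat.Coprime e (q / l) :=
      Nat.Coprime.coprime_dvd_right (div_dvd_div_nat he0 (Nat.dvd_lcm_left e g) hlq) hco
    have h2 : Nat.Coprime g (q / l) :=
      Nat.Coprime.coprime_dvd_right (div_dvd_div_nat hg0 (Nat.dvd_lcm_right e g) hlq) hgco
    exact Nat.Coprime.coprime_dvd_left (Nat.lcm_dvd (dvd_mul_right e g) (dvd_mul_left g e))
      (Nat.Coprime.mul h1 h2)
  have hle : l ≤ g := le_ugcd hq hlm hlq hlco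
  have hgl : g ∣ l := Nat.dvd_lcm_right e g
  have hlg : l = g := le_antisymm hle (Nat.le_of_dvd (Nat.pos_of_ne_zero
    (fun h => hq (Nat.eq_zero_of_zero_dvd (h ▸ hlq)))) hgl)
  exact hlg ▸ Nat.dvd_lcm_left e g

lemma ugcd_eq_one {k d : ℕ} (hd : d ≠ 0)
    (h : ∀ e, e ∣ k → e ∣ d → Nat.Coprime e (d / e) → e = 1) : ugcd k d = 1 := by
  have hm := Finset.mem_filter.mp (ugcd_mem k d hd)
  exact h _ hm.2.1 (Nat.mem_divisors.mp hm.1).1 hm.2.2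

/-- forward: d unitary divisor, ugcd k d = 1 -/
lemma ugcd_mul {q d k : ℕ} (hq : q ≠ 0) (hd : d ∣ q) (hco : Nat.Coprime d (q / d))
    (hk0 : k ≠ 0) (hk : ugcd k d = 1) : ugcd (k * (q / d)) q = q / d := by
  have hd0 : d ≠ 0 := fun h => hq (Nat.eq_zero_of_zero_dvd (h ▸ hd))
  have hqd0 : q / d ≠ 0 := (Nat.div_pos (Nat.le_of_dvd (Nat.pos_of_ne_zero hq) hd)
    (Nat.pos_of_ne_zero hd0)).ne'
  have hddq : q / (q / d) = d := Nat.div_div_self hd hq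
  -- q/d divides ugcd
  have h1 : q / d ∣ ugcd (k * (q / d)) q :=
    dvd_ugcd_s2 hq (dvd_mul_left _ _) (Nat.div_dvd_of_dvd hd) (by rw [hddq]; exact hco.symm)
  set g := ugcd (k * (q / d)) q with hg
  set t := g / (q / d) with ht
  have htg : t * (q / d) = g := Nat.div_mul_cancel h1
  have hgq : g ∣ q := ugcd_dvd_right _ _ hq
  have htd : t ∣ d := by
    have : t * (q / d) ∣ d * (q / d) := by
      rw [htg, mul_comm d (q / d), Nat.div_mul_cancel hd]; exact hgq
    exact (mul_dvd_mul_iff_right (Nat.pos_of_ne_zero hqd0).ne').mp this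
  have htk : t ∣ k := by
    have : t * (q / d) ∣ k * (q / d) := htg ▸ ugcd_dvd_left _ _ hq
    exact (mul_dvd_mul_iff_right (Nat.pos_of_ne_zero hqd0).ne').mp this
  have htco : Nat.Coprime t (d / t) := by
    have hgco := ugcd_coprime (k * (q / d)) q hq
    have : q / g = d / t := by
      rw [← htg, mul_comm t (q / d), ← Nat.div_div_eq_div_mul, hddq]
    rw [this] at hgco
    exact Nat.Coprime.coprime_dvd_left (⟨q / d, htg.symm⟩ : t ∣ g) hgco
  have ht1 : t = 1 := Nat.dvd_one.mp (hk ▸ dvd_ugcd_s2 hd0 htk htd htco)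
  rw [← htg, ht1, one_mul]

lemma ugcd_div_eq_one {m q : ℕ} (hq : q ≠ 0) (hm : m ≠ 0) :
    ugcd (m / ugcd m q) (q / ugcd m q) = 1 := by
  set g := ugcd m q with hg
  have hgm := ugcd_dvd_left m q hq
  have hgq := ugcd_dvd_right m q hq
  have hgco := ugcd_coprime m q hq
  have hg0 : g ≠ 0 := (ugcd_pos m q hq).ne'
  have hqg0 : q / g ≠ 0 := (Nat.div_pos (Nat.le_of_dvd (Nat.pos_of_ne_zero hq) hgq)
    (Nat.pos_of_ne_zero hg0)).ne'
  apply ugcd_eq_one hqg0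
  intro e hek hed heco
  have he0 : e ≠ 0 := fun h => hqg0 (Nat.eq_zero_of_zero_dvd (h ▸ hed))
  have h1 : g * e ∣ m := (Nat.dvd_div_iff_mul_dvd hgm).mp hek
  have h2 : g * e ∣ q := (Nat.dvd_div_iff_mul_dvd hgq).mp hed
  have h3 : Nat.Coprime (g * e) (q / (g * e)) := by
    have hqge : q / (g * e) = q / g / e := (Nat.div_div_eq_div_mul q g e).symm
    rw [hqge]
    exact Nat.Coprime.mul
      (Nat.Coprime.coprime_dvd_right (Nat.div_dvd_of_dvd hed) hgco) heco
  have := le_ugcd hq h1 h2 h3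
  have : g * e ≤ g * 1 := by simpa using this
  have he1 : e ≤ 1 := Nat.le_of_mul_le_mul_left this (Nat.pos_of_ne_zero hg0)
  omega

lemma exp_sum_eval (q n : ℕ) (hq0 : q ≠ 0) :
    ∑ m ∈ Finset.Icc 1 q, Complex.exp (2 * Real.pi * Complex.I * m * n / q)
      = if q ∣ n then (q : ℂ) else 0 := by
  have hqC : (q : ℂ) ≠ 0 := Nat.cast_ne_zero.mpr hq0
  set ζ : ℂ := Complex.exp (2 * Real.pi * Complex.I * n / q) with hζ
  have hterm : ∀ m : ℕ, Complex.exp (2 * Real.pi * Complex.I * m * n / q) = ζ ^ m := by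
    intro m
    rw [hζ, ← Complex.exp_nat_mul]
    congr 1
    field_simp
  have hζq : ζ ^ q = 1 := by
    rw [hζ, ← Complex.exp_nat_mul]
    have h : (q : ℂ) * (2 * Real.pi * Complex.I * n / q) = (n : ℤ) * (2 * Real.pi * Complex.I) := by
      push_cast
      field_simp
    rw [h, Complex.exp_int_mul_two_pi_mul_I]
  by_cases hdvd : q ∣ n
  · obtain ⟨c, rfl⟩ := hdvd
    have hζ1 : ζ = 1 := by
      rw [hζ]
      have h : 2 * Real.pi * Complex.I * ((q * c : ℕ) : ℂ) / q
          = (c : ℤ) * (2 * Real.pi * Complex.I) := by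
        push_cast
        field_simp
      rw [h, Complex.exp_int_mul_two_pi_mul_I]
    rw [if_pos ⟨c, rfl⟩]
    simp only [hterm, hζ1, one_pow, Finset.sum_const, Nat.card_Icc, nsmul_eq_mul, mul_one]
    norm_num
  · have hpi : (2 : ℂ) * Real.pi * Complex.I ≠ 0 := by
      simp [Real.pi_ne_zero, Complex.I_ne_zero]
    have hζ1 : ζ ≠ 1 := by
      intro h
      rw [hζ, Complex.exp_eq_one_iff] at h
      obtain ⟨k, hk⟩ := h
      have h3 : 2 * (Real.pi : ℂ) * Complex.I * n = k * (2 * Real.pi * Complex.I) * q :=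
        (div_eq_iff hqC).mp hk
      have h2 : (n : ℂ) = (k : ℂ) * q := mul_left_cancel₀ hpi (by push_cast; linear_combination h3)
      have h4 : (n : ℤ) = k * q := by exact_mod_cast h2
      exact hdvd (Int.natCast_dvd_natCast.mp ⟨k, by rw [h4]; ring⟩)
    rw [if_neg hdvd]
    simp only [hterm]
    rw [← Finset.Ico_add_one_right_eq_Icc, Finset.sum_Ico_eq_sum_range]
    simp only [Nat.add_sub_cancel]
    have hp : ∀ i : ℕ, ζ ^ (1 + i) = ζ * ζ ^ i := fun i => by rw [pow_add, pow_one]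
    simp only [hp]
    rw [← Finset.mul_sum, geom_sum_eq hζ1, hζq, sub_self, zero_div, mul_zero]

set_option linter.unusedVariables false in
theorem stmt2 (q n : ℕ) (hq : 1 ≤ q) (hn : 1 ≤ n) :
    ∑ d ∈ unitaryDivisors q, cstar d n = if q ∣ n then (q : ℂ) else 0 := by
  have hq0 : q ≠ 0 := by omega
  rw [← exp_sum_eval q n hq0]
  have hc : ∀ d, cstar d n = ∑ k ∈ (Finset.Icc 1 d).filter (fun k => ugcd k d = 1),
      Complex.exp (2 * Real.pi * Complex.I * k * n / d) :=
    fun d => (Finset.sum_filter _ _).symm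
  simp only [hc]
  rw [Finset.sum_sigma']
  apply Finset.sum_nbij' (i := fun p => p.2 * (q / p.1))
      (j := fun m => ⟨q / ugcd m q, m / ugcd m q⟩)
  · rintro ⟨d, k⟩ ha
    dsimp only
    rw [Finset.mem_sigma] at ha
    obtain ⟨hd1, hk1⟩ := ha
    dsimp only at hd1 hk1
    rw [unitaryDivisors, Finset.mem_filter, Nat.mem_divisors] at hd1
    rw [Finset.mem_filter, Finset.mem_Icc] at hk1
    obtain ⟨⟨hdq, -⟩, hco⟩ := hd1
    have hd0 : d ≠ 0 := fun h => hq0 (Nat.eq_zero_of_zero_dvd (h ▸ hdq))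
    have hqd : 0 < q / d := Nat.div_pos (Nat.le_of_dvd (by omega) hdq) (Nat.pos_of_ne_zero hd0)
    rw [Finset.mem_Icc]
    constructor
    · have : 1 * 1 ≤ k * (q / d) := Nat.mul_le_mul hk1.1.1 hqd
      omega
    · calc k * (q / d) ≤ d * (q / d) := Nat.mul_le_mul_right _ hk1.1.2
        _ = q := Nat.mul_div_cancel' hdq
  · intro m hm
    rw [Finset.mem_Icc] at hm
    have hm0 : m ≠ 0 := by omega
    set g := ugcd m q with hg
    have hgm := ugcd_dvd_left m q hq0
    have hgq := ugcd_dvd_right m q hq0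
    have hgco := ugcd_coprime m q hq0
    have hg0 : 0 < g := ugcd_pos m q hq0
    rw [Finset.mem_sigma]
    constructor
    · rw [unitaryDivisors, Finset.mem_filter, Nat.mem_divisors]
      refine ⟨⟨Nat.div_dvd_of_dvd hgq, hq0⟩, ?_⟩
      rw [Nat.div_div_self hgq hq0]
      exact hgco.symm
    · rw [Finset.mem_filter, Finset.mem_Icc]
      refine ⟨⟨?_, Nat.div_le_div_right hm.2⟩, ugcd_div_eq_one hq0 hm0⟩
      exact Nat.one_le_div_iff hg0 |>.mpr (Nat.le_of_dvd (by omega) hgm)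
  · rintro ⟨d, k⟩ ha
    dsimp only
    rw [Finset.mem_sigma] at ha
    obtain ⟨hd1, hk1⟩ := ha
    dsimp only at hd1 hk1
    rw [unitaryDivisors, Finset.mem_filter, Nat.mem_divisors] at hd1
    rw [Finset.mem_filter, Finset.mem_Icc] at hk1
    obtain ⟨⟨hdq, -⟩, hco⟩ := hd1
    have hd0 : d ≠ 0 := fun h => hq0 (Nat.eq_zero_of_zero_dvd (h ▸ hdq))
    have hqd : 0 < q / d := Nat.div_pos (Nat.le_of_dvd (by omega) hdq) (Nat.pos_of_ne_zero hd0)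
    have hk0 : k ≠ 0 := by omega
    have hmain := ugcd_mul hq0 hdq hco hk0 hk1.2
    have e1 : q / ugcd (k * (q / d)) q = d := by rw [hmain]; exact Nat.div_div_self hdq hq0
    have e2 : k * (q / d) / ugcd (k * (q / d)) q = k := by
      rw [hmain]; exact Nat.mul_div_cancel _ hqd
    simp only [e1, e2]
  · intro m hm
    rw [Finset.mem_Icc] at hm
    have hm0 : m ≠ 0 := by omega
    have hgm := ugcd_dvd_left m q hq0
    have hgq := ugcd_dvd_right m q hq0
    show m / ugcd m q * (q / (q / ugcd m q)) = m
    rw [Nat.div_div_self hgq hq0, Nat.div_mul_cancel hgm]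
  · rintro ⟨d, k⟩ ha
    dsimp only
    rw [Finset.mem_sigma] at ha
    obtain ⟨hd1, hk1⟩ := ha
    dsimp only at hd1 hk1
    rw [unitaryDivisors, Finset.mem_filter, Nat.mem_divisors] at hd1
    obtain ⟨⟨hdq, -⟩, hco⟩ := hd1
    have hd0 : d ≠ 0 := fun h => hq0 (Nat.eq_zero_of_zero_dvd (h ▸ hdq))
    have hdC : (d : ℂ) ≠ 0 := Nat.cast_ne_zero.mpr hd0
    have hqC : (q : ℂ) ≠ 0 := Nat.cast_ne_zero.mpr hq0
    congr 1
    have hcast : ((k * (q / d) : ℕ) : ℂ) = (k : ℂ) * ((q : ℂ) / d) := by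
      rw [Nat.cast_mul, Nat.cast_div hdq hdC]
    rw [hcast]
    field_simp
end
end

section
/- For fixed n ∈ ℕ, the function q ↦ c*_q(n) is multiplicative: if gcd(q₁, q₂) = 1 then c*_{q₁q₂}(n) = c*_{q₁}(n) · c*_{q₂}(n). -/
open Complex Finset

noncomputable section

lemma ugcd_eq_one_iff {k q : ℕ} (hq : q ≠ 0) :
    ugcd k q = 1 ↔ ∀ d, d ∣ q → Nat.Coprime d (q / d) → d ∣ k → d = 1 := by
  unfold ugcd
  constructor
  · intro hs d hdq hco hdk
    have hmem : d ∈ ((q.divisors).filter (fun d => d ∣ k ∧ Nat.Coprime d (q / d))) :=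
      Finset.mem_filter.mpr ⟨Nat.mem_divisors.mpr ⟨hdq, hq⟩, hdk, hco⟩
    have h1 : d ≤ 1 := hs ▸ Finset.le_sup (f := id) hmem
    have hd0 : d ≠ 0 := by rintro rfl; exact hq (Nat.eq_zero_of_zero_dvd hdq)
    omega
  · intro H
    apply le_antisymm
    · apply Finset.sup_le
      intro d hd
      simp only [Finset.mem_filter, Nat.mem_divisors] at hd
      exact le_of_eq (H d hd.1.1 hd.2.2 hd.2.1)
    · apply Finset.le_sup (f := id)
      simp [Nat.mem_divisors, hq]

lemma ugcd_mod (k q : ℕ) : ugcd (k % q) q = ugcd k q := by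
  unfold ugcd
  congr 1
  apply Finset.filter_congr
  intro d hd
  have hdq : d ∣ q := Nat.dvd_of_mem_divisors hd
  simp [Nat.dvd_mod_iff hdq]

lemma exp_nat_two_pi (m : ℕ) : Complex.exp (2 * (Real.pi : ℂ) * Complex.I * m) = 1 := by
  have := Complex.exp_int_mul_two_pi_mul_I (m : ℤ)
  rw [show ((m : ℤ) : ℂ) * (2 * ↑Real.pi * Complex.I) = 2 * (Real.pi : ℂ) * Complex.I * m by
    push_cast; ring] at this
  exact this

lemma exp_mod (q n k : ℕ) (hq : q ≠ 0) :
    Complex.exp (2 * (Real.pi : ℂ) * Complex.I * ((k % q : ℕ) : ℂ) * n / q)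
      = Complex.exp (2 * (Real.pi : ℂ) * Complex.I * k * n / q) := by
  have hq' : (q : ℂ) ≠ 0 := Nat.cast_ne_zero.mpr hq
  obtain ⟨b, hb⟩ : ∃ b, k = q * b + k % q := ⟨k / q, by rw [Nat.div_add_mod]⟩
  have harg : 2 * (Real.pi : ℂ) * Complex.I * k * n / q
      = 2 * (Real.pi : ℂ) * Complex.I * ((k % q : ℕ) : ℂ) * n / q
        + 2 * (Real.pi : ℂ) * Complex.I * ((b * n : ℕ) : ℂ) := by
    conv_lhs => rw [hb]
    push_cast
    field_simp
    ring
  rw [harg, Complex.exp_add, exp_nat_two_pi, mul_one]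

lemma cstar_eq_zmod_sum (q n : ℕ) [NeZero q] :
    cstar q n = ∑ k : ZMod q,
      if ugcd (ZMod.val k) q = 1
        then Complex.exp (2 * Real.pi * Complex.I * (ZMod.val k) * n / q) else 0 := by
  have hq : q ≠ 0 := NeZero.ne q
  unfold cstar
  apply Finset.sum_nbij' (i := fun k : ℕ => (k : ZMod q))
    (j := fun x : ZMod q => if ZMod.val x = 0 then q else ZMod.val x)
  · intro a _; exact Finset.mem_univ _
  · intro b _
    by_cases hb : ZMod.val b = 0
    · simp only [hb, if_pos rfl]
      exact Finset.mem_Icc.mpr ⟨Nat.one_le_iff_ne_zero.mpr hq, le_rfl⟩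
    · simp only [if_neg hb]
      exact Finset.mem_Icc.mpr ⟨Nat.one_le_iff_ne_zero.mpr hb, (ZMod.val_lt b).le⟩
  · intro a ha
    rw [Finset.mem_Icc] at ha
    rcases eq_or_lt_of_le ha.2 with h | h
    · subst h
      simp [ZMod.val_natCast, Nat.mod_self]
    · rw [ZMod.val_natCast, Nat.mod_eq_of_lt h]
      have : a ≠ 0 := by omega
      simp [this]
  · intro b _
    by_cases hb : ZMod.val b = 0
    · simp only [hb, if_pos rfl]
      rw [ZMod.natCast_self]
      exact ((ZMod.val_eq_zero b).mp hb).symm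
    · simp only [if_neg hb]
      exact ZMod.natCast_zmod_val b
  · intro a ha
    rw [ZMod.val_natCast]
    rw [ugcd_mod, exp_mod q n a hq]

lemma ugcd_one_mul_iff {q₁ q₂ : ℕ} (hq₁ : q₁ ≠ 0) (hq₂ : q₂ ≠ 0) (h : Nat.Coprime q₁ q₂)
    (m : ℕ) : ugcd m (q₁ * q₂) = 1 ↔ ugcd m q₁ = 1 ∧ ugcd m q₂ = 1 := by
  rw [ugcd_eq_one_iff (Nat.mul_ne_zero hq₁ hq₂), ugcd_eq_one_iff hq₁, ugcd_eq_one_iff hq₂]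
  constructor
  · intro H
    constructor
    · intro d hd hco hdm
      obtain ⟨e, rfl⟩ := hd
      have hd0 : 0 < d := Nat.pos_of_ne_zero (by rintro rfl; exact hq₁ (by simp))
      have hde : d * e / d = e := Nat.mul_div_cancel_left _ hd0
      rw [hde] at hco
      refine H d ⟨e * q₂, by ring⟩ ?_ hdm
      rw [show d * e * q₂ / d = e * q₂ by
        rw [mul_assoc, Nat.mul_div_cancel_left _ hd0]]
      exact Nat.Coprime.mul_right hco (Nat.Coprime.coprime_dvd_left ⟨e, rfl⟩ h)
    · intro d hd hco hdm
      obtain ⟨e, rfl⟩ := hd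
      have hd0 : 0 < d := Nat.pos_of_ne_zero (by rintro rfl; exact hq₂ (by simp))
      have hde : d * e / d = e := Nat.mul_div_cancel_left _ hd0
      rw [hde] at hco
      refine H d ⟨q₁ * e, by ring⟩ ?_ hdm
      rw [show q₁ * (d * e) / d = q₁ * e by
        rw [show q₁ * (d * e) = d * (q₁ * e) by ring, Nat.mul_div_cancel_left _ hd0]]
      exact Nat.Coprime.mul_right (Nat.Coprime.coprime_dvd_left ⟨e, rfl⟩ h.symm) hco
  · rintro ⟨H₁, H₂⟩ d hd hco hdm
    have heq : Nat.gcd d q₁ * Nat.gcd d q₂ = d :=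
      (Nat.gcd_mul_gcd_eq_iff_dvd_mul_of_coprime h).mpr hd
    set d₁ := Nat.gcd d q₁ with hd₁def
    set d₂ := Nat.gcd d q₂ with hd₂def
    obtain ⟨e₁, he₁⟩ : d₁ ∣ q₁ := Nat.gcd_dvd_right d q₁
    obtain ⟨e₂, he₂⟩ : d₂ ∣ q₂ := Nat.gcd_dvd_right d q₂
    have hd₁0 : 0 < d₁ :=
      Nat.pos_of_ne_zero (fun h0 => hq₁ ((Nat.gcd_eq_zero_iff.mp h0).2))
    have hd₂0 : 0 < d₂ :=
      Nat.pos_of_ne_zero (fun h0 => hq₂ ((Nat.gcd_eq_zero_iff.mp h0).2))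
    have hdd₁ : d₁ ∣ d := Nat.gcd_dvd_left d q₁
    have hdd₂ : d₂ ∣ d := Nat.gcd_dvd_left d q₂
    have hquot : q₁ * q₂ / d = e₁ * e₂ := by
      rw [he₁, he₂, show d₁ * e₁ * (d₂ * e₂) = d₁ * d₂ * (e₁ * e₂) by ring, heq,
        ← heq, Nat.mul_div_cancel_left _ (Nat.mul_pos hd₁0 hd₂0)]
    rw [hquot] at hco
    have hq₁div : q₁ / d₁ = e₁ := by rw [he₁, Nat.mul_div_cancel_left _ hd₁0]
    have hq₂div : q₂ / d₂ = e₂ := by rw [he₂, Nat.mul_div_cancel_left _ hd₂0]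
    have hco₁ : Nat.Coprime d₁ e₁ :=
      Nat.Coprime.coprime_dvd_left hdd₁ (Nat.Coprime.coprime_dvd_right ⟨e₂, rfl⟩ hco)
    have hco₂ : Nat.Coprime d₂ e₂ :=
      Nat.Coprime.coprime_dvd_left hdd₂
        (Nat.Coprime.coprime_dvd_right ⟨e₁, mul_comm e₁ e₂⟩ hco)
    have h₁ : d₁ = 1 := H₁ d₁ ⟨e₁, he₁⟩ (by rw [hq₁div]; exact hco₁) (hdd₁.trans hdm)
    have h₂ : d₂ = 1 := H₂ d₂ ⟨e₂, he₂⟩ (by rw [hq₂div]; exact hco₂) (hdd₂.trans hdm)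
    rw [← heq, h₁, h₂]

lemma ugcd_shift {q₁ q₂ : ℕ} (hq₁ : q₁ ≠ 0) (h : Nat.Coprime q₁ q₂) (a b : ℕ) :
    ugcd (a * q₂ + b * q₁) q₁ = 1 ↔ ugcd a q₁ = 1 := by
  rw [ugcd_eq_one_iff hq₁, ugcd_eq_one_iff hq₁]
  have key : ∀ d, d ∣ q₁ → (d ∣ a * q₂ + b * q₁ ↔ d ∣ a) := by
    intro d hd
    have hbq : d ∣ b * q₁ := Dvd.dvd.mul_left hd b
    have hco : Nat.Coprime d q₂ := Nat.Coprime.coprime_dvd_left hd h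
    constructor
    · intro hsum
      have : d ∣ a * q₂ := by
        have := Nat.dvd_sub hsum hbq
        rwa [Nat.add_sub_cancel] at this
      exact hco.dvd_of_dvd_mul_right this
    · intro ha
      exact Nat.dvd_add (ha.mul_right q₂) hbq
  constructor
  · intro H d hd hco hda
    exact H d hd hco ((key d hd).mpr hda)
  · intro H d hd hco hdsum
    exact H d hd hco ((key d hd).mp hdsum)

theorem stmt3 (n q₁ q₂ : ℕ) (hn : 1 ≤ n) (hq₁ : 1 ≤ q₁) (hq₂ : 1 ≤ q₂)
    (h : Nat.Coprime q₁ q₂) :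
    cstar (q₁ * q₂) n = cstar q₁ n * cstar q₂ n := by
  have hq₁' : q₁ ≠ 0 := by omega
  have hq₂' : q₂ ≠ 0 := by omega
  have hQ : q₁ * q₂ ≠ 0 := Nat.mul_ne_zero hq₁' hq₂'
  haveI : NeZero q₁ := ⟨hq₁'⟩
  haveI : NeZero q₂ := ⟨hq₂'⟩
  haveI : NeZero (q₁ * q₂) := ⟨hQ⟩
  rw [cstar_eq_zmod_sum (q₁ * q₂) n, cstar_eq_zmod_sum q₁ n, cstar_eq_zmod_sum q₂ n]
  -- the bijection
  set β : ZMod q₁ × ZMod q₂ → ZMod (q₁ * q₂) :=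
    fun p => ((ZMod.val p.1 * q₂ + ZMod.val p.2 * q₁ : ℕ) : ZMod (q₁ * q₂)) with hβ
  have hinj : Function.Injective β := by
    intro x y hxy
    have hcast₁ := congrArg (ZMod.castHom (dvd_mul_right q₁ q₂) (ZMod q₁)) hxy
    have hcast₂ := congrArg (ZMod.castHom (dvd_mul_left q₂ q₁) (ZMod q₂)) hxy
    simp only [hβ, map_natCast] at hcast₁ hcast₂
    push_cast at hcast₁ hcast₂
    simp only [ZMod.natCast_zmod_val, ZMod.natCast_self, mul_zero, add_zero, zero_mul,
      zero_add] at hcast₁ hcast₂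
    have hu₁ : IsUnit ((q₂ : ℕ) : ZMod q₁) := by
      rw [← ZMod.coe_unitOfCoprime q₂ h.symm]; exact (ZMod.unitOfCoprime _ _).isUnit
    have hu₂ : IsUnit ((q₁ : ℕ) : ZMod q₂) := by
      rw [← ZMod.coe_unitOfCoprime q₁ h]; exact (ZMod.unitOfCoprime _ _).isUnit
    exact Prod.ext (hu₁.mul_right_cancel hcast₁) (hu₂.mul_right_cancel hcast₂)
  have hbij : Function.Bijective β := by
    rw [Fintype.bijective_iff_injective_and_card]
    refine ⟨hinj, ?_⟩
    simp [ZMod.card]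
  rw [← Fintype.sum_bijective β hbij
    (fun p : ZMod q₁ × ZMod q₂ =>
      if ugcd (ZMod.val (β p)) (q₁ * q₂) = 1
        then Complex.exp (2 * Real.pi * Complex.I * (ZMod.val (β p)) * n / (q₁ * q₂ : ℕ)) else 0)
    (fun k : ZMod (q₁ * q₂) =>
      if ugcd (ZMod.val k) (q₁ * q₂) = 1
        then Complex.exp (2 * Real.pi * Complex.I * (ZMod.val k) * n / (q₁ * q₂ : ℕ)) else 0)
    (fun p => rfl)]
  rw [Fintype.sum_prod_type]
  rw [Finset.sum_mul_sum]
  apply Finset.sum_congr rfl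
  intro k₁ _
  apply Finset.sum_congr rfl
  intro k₂ _
  -- pointwise identity
  have hval : ZMod.val (β (k₁, k₂)) = (ZMod.val k₁ * q₂ + ZMod.val k₂ * q₁) % (q₁ * q₂) :=
    ZMod.val_natCast _ _
  have hcond : ugcd (ZMod.val (β (k₁, k₂))) (q₁ * q₂) = 1 ↔
      (ugcd (ZMod.val k₁) q₁ = 1 ∧ ugcd (ZMod.val k₂) q₂ = 1) := by
    rw [hval, ugcd_mod, ugcd_one_mul_iff hq₁' hq₂' h,
      ugcd_shift hq₁' h, show ZMod.val k₁ * q₂ + ZMod.val k₂ * q₁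
        = ZMod.val k₂ * q₁ + ZMod.val k₁ * q₂ by ring, ugcd_shift hq₂' h.symm]
  have hexp : Complex.exp (2 * Real.pi * Complex.I * (ZMod.val (β (k₁, k₂))) * n / (q₁ * q₂ : ℕ))
      = Complex.exp (2 * Real.pi * Complex.I * (ZMod.val k₁) * n / q₁)
        * Complex.exp (2 * Real.pi * Complex.I * (ZMod.val k₂) * n / q₂) := by
    rw [hval]
    rw [exp_mod (q₁ * q₂) n _ hQ, ← Complex.exp_add]
    congr 1
    have h₁ : (q₁ : ℂ) ≠ 0 := Nat.cast_ne_zero.mpr hq₁'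
    have h₂ : (q₂ : ℂ) ≠ 0 := Nat.cast_ne_zero.mpr hq₂'
    push_cast
    field_simp
  rw [if_congr hcond rfl rfl]
  by_cases h1 : ugcd (ZMod.val k₁) q₁ = 1 <;> by_cases h2 : ugcd (ZMod.val k₂) q₂ = 1
  · rw [if_pos ⟨h1, h2⟩, if_pos h1, if_pos h2, hexp]
  · rw [if_neg (by tauto), if_neg h2, mul_zero]
  · rw [if_neg (by tauto), if_neg h1, zero_mul]
  · rw [if_neg (by tauto), if_neg h1, zero_mul]
end
end

section
/- For any q, n ∈ ℕ, Σ_{d ∣∣ q} |c*_d(n)| = 2^{ω(q/(n,q)_*)} · (n,q)_*. -/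
open Complex Finset

noncomputable section

/-- product of unitary components over a set of primes -/
def UD (q : ℕ) (S : Finset ℕ) : ℕ := ∏ p ∈ S, p ^ q.factorization p

lemma UD_ne_zero {q : ℕ} {S : Finset ℕ} (hS : S ⊆ q.primeFactors) : UD q S ≠ 0 := by
  refine Finset.prod_ne_zero_iff.2 fun p hp => ?_
  exact pow_ne_zero _ (Nat.Prime.ne_zero (Nat.prime_of_mem_primeFactors (hS hp)))

lemma UD_factorization {q : ℕ} {S : Finset ℕ} (hS : S ⊆ q.primeFactors) (r : ℕ) :
    (UD q S).factorization r = if r ∈ S then q.factorization r else 0 := by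
  have h1 : (UD q S).factorization
      = ∑ p ∈ S, Finsupp.single p (q.factorization p) := by
    rw [UD, Nat.factorization_prod (fun p hp =>
      pow_ne_zero _ (Nat.Prime.ne_zero (Nat.prime_of_mem_primeFactors (hS hp))))]
    exact Finset.sum_congr rfl fun p hp =>
      (Nat.prime_of_mem_primeFactors (hS hp)).factorization_pow
  rw [h1]
  simp only [Finsupp.finset_sum_apply, Finsupp.single_apply]
  exact Finset.sum_ite_eq' S r _

lemma UD_primeFactors {q : ℕ} {S : Finset ℕ} (hS : S ⊆ q.primeFactors) :
    (UD q S).primeFactors = S := by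
  ext r
  rw [← Nat.support_factorization, Finsupp.mem_support_iff, UD_factorization hS r]
  constructor
  · intro h
    by_contra hr
    simp [hr] at h
  · intro hr
    have : q.factorization r ≠ 0 := by
      have := hS hr
      rw [← Nat.support_factorization, Finsupp.mem_support_iff] at this
      exact this
    simp [hr, this]

lemma UD_primeFactors_eq_self (q : ℕ) (hq : q ≠ 0) : UD q q.primeFactors = q := by
  conv_rhs => rw [← Nat.factorization_prod_pow_eq_self hq]
  rw [UD, Nat.prod_factorization_eq_prod_primeFactors]

lemma UD_mul_sdiff {q : ℕ} {S : Finset ℕ} (hq : q ≠ 0) (hS : S ⊆ q.primeFactors) :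
    UD q S * UD q (q.primeFactors \ S) = q := by
  rw [UD, UD, ← Finset.prod_union (Finset.disjoint_sdiff),
    Finset.union_sdiff_of_subset hS, ← UD, UD_primeFactors_eq_self q hq]

lemma UD_div {q : ℕ} {S : Finset ℕ} (hq : q ≠ 0) (hS : S ⊆ q.primeFactors) :
    q / UD q S = UD q (q.primeFactors \ S) := by
  refine Nat.div_eq_of_eq_mul_left (Nat.pos_of_ne_zero (UD_ne_zero hS)) ?_
  rw [mul_comm]
  exact (UD_mul_sdiff hq hS).symm

lemma UD_dvd_q {q : ℕ} {S : Finset ℕ} (hq : q ≠ 0) (hS : S ⊆ q.primeFactors) :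
    UD q S ∣ q :=
  Dvd.intro _ (UD_mul_sdiff hq hS)

lemma UD_coprime {q : ℕ} {S : Finset ℕ} (hq : q ≠ 0) (hS : S ⊆ q.primeFactors) :
    Nat.Coprime (UD q S) (q / UD q S) := by
  rw [UD_div hq hS]
  rw [← Nat.disjoint_primeFactors (UD_ne_zero hS) (UD_ne_zero (Finset.sdiff_subset.trans le_rfl))]
  rw [UD_primeFactors hS, UD_primeFactors (Finset.sdiff_subset)]
  exact Finset.disjoint_sdiff

lemma UD_dvd_iff {q k : ℕ} {S : Finset ℕ} (hS : S ⊆ q.primeFactors) (hk : k ≠ 0) :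
    UD q S ∣ k ↔ ∀ p ∈ S, p ^ q.factorization p ∣ k := by
  rw [← Nat.factorization_le_iff_dvd (UD_ne_zero hS) hk]
  constructor
  · intro h p hp
    have := h p
    rw [UD_factorization hS p, if_pos hp] at this
    exact (Nat.Prime.pow_dvd_iff_le_factorization
      (Nat.prime_of_mem_primeFactors (hS hp)) hk).2 this
  · intro h p
    rw [UD_factorization hS p]
    split_ifs with hp
    · exact (Nat.Prime.pow_dvd_iff_le_factorization
        (Nat.prime_of_mem_primeFactors (hS hp)) hk).1 (h p hp)
    · exact Nat.zero_le _

lemma UD_mono {q : ℕ} {S T : Finset ℕ} (h : S ⊆ T) : UD q S ∣ UD q T :=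
  Finset.prod_dvd_prod_of_subset S T _ h

lemma UD_eq_one_iff {q : ℕ} {S : Finset ℕ} (hS : S ⊆ q.primeFactors) :
    UD q S = 1 ↔ S = ∅ := by
  constructor
  · intro h
    have := UD_primeFactors hS
    rw [h] at this
    simpa using this.symm
  · intro h; simp [h, UD]

lemma unitary_factorization_eq {q d : ℕ} (hq : q ≠ 0) (hd : d ∣ q)
    (hco : Nat.Coprime d (q / d)) {p : ℕ} (hp : p ∈ d.primeFactors) :
    d.factorization p = q.factorization p := by
  have hd0 : d ≠ 0 := fun h => hq (by simpa [h] using hd)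
  have hqd0 : q / d ≠ 0 := fun h => hq (by rw [← Nat.mul_div_cancel' hd, h, mul_zero])
  have hmul : q = d * (q / d) := (Nat.mul_div_cancel' hd).symm
  have hfac : q.factorization p = d.factorization p + (q / d).factorization p := by
    conv_lhs => rw [hmul]
    rw [Nat.factorization_mul hd0 hqd0]
    rfl
  have hnd : ¬ p ∣ (q / d) := by
    intro hpd
    have hpp : p.Prime := Nat.prime_of_mem_primeFactors hp
    have : p ∣ Nat.gcd d (q / d) := Nat.dvd_gcd (Nat.dvd_of_mem_primeFactors hp) hpd
    rw [hco] at this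
    exact hpp.one_lt.ne' (Nat.dvd_one.1 this)
  rw [hfac, Nat.factorization_eq_zero_of_not_dvd hnd, add_zero]

lemma eq_UD_self {q d : ℕ} (hq : q ≠ 0) (hd : d ∣ q) (hco : Nat.Coprime d (q / d)) :
    d = UD q d.primeFactors := by
  have hd0 : d ≠ 0 := fun h => hq (by simpa [h] using hd)
  conv_lhs => rw [← UD_primeFactors_eq_self d hd0]
  rw [UD, UD]
  exact Finset.prod_congr rfl fun p hp => by rw [unitary_factorization_eq hq hd hco hp]

lemma unitaryDivisors_eq_image (q : ℕ) (hq : q ≠ 0) :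
    unitaryDivisors q = (q.primeFactors.powerset).image (UD q) := by
  ext d
  simp only [unitaryDivisors, Finset.mem_filter, Nat.mem_divisors,
    Finset.mem_image, Finset.mem_powerset]
  constructor
  · rintro ⟨⟨hd, _⟩, hco⟩
    exact ⟨d.primeFactors, Nat.primeFactors_mono hd hq, (eq_UD_self hq hd hco).symm⟩
  · rintro ⟨S, hS, rfl⟩
    exact ⟨⟨UD_dvd_q hq hS, hq⟩, UD_coprime hq hS⟩

/-- the set of primes whose full `q`-component divides `n` -/
def Nset (q n : ℕ) : Finset ℕ := q.primeFactors.filter (fun p => p ^ q.factorization p ∣ n)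

lemma Nset_subset (q n : ℕ) : Nset q n ⊆ q.primeFactors := Finset.filter_subset _ _

lemma ugcd_eq_UD (q n : ℕ) (hq : q ≠ 0) (hn : n ≠ 0) :
    ugcd n q = UD q (Nset q n) := by
  have hNsub : Nset q n ⊆ q.primeFactors := Nset_subset q n
  apply le_antisymm
  · apply Finset.sup_le
    intro d hd
    simp only [Finset.mem_filter, Nat.mem_divisors] at hd
    obtain ⟨⟨hdq, _⟩, hdn, hco⟩ := hd
    have hsub : d.primeFactors ⊆ Nset q n := by
      intro p hp
      rw [Nset, Finset.mem_filter]
      refine ⟨Nat.primeFactors_mono hdq hq hp, ?_⟩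
      have h1 : p ^ q.factorization p ∣ d := by
        rw [← unitary_factorization_eq hq hdq hco hp]
        exact Nat.ordProj_dvd d p
      exact h1.trans hdn
    have h2 : d ∣ UD q (Nset q n) := (eq_UD_self hq hdq hco) ▸ UD_mono hsub
    exact Nat.le_of_dvd (Nat.pos_of_ne_zero (UD_ne_zero hNsub)) h2
  · apply Finset.le_sup (f := id)
    simp only [Finset.mem_filter, Nat.mem_divisors]
    refine ⟨⟨UD_dvd_q hq hNsub, hq⟩, ?_, UD_coprime hq hNsub⟩
    exact (UD_dvd_iff hNsub hn).2 fun p hp => (Finset.mem_filter.1 hp).2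

lemma ugcd_eq_one_iff_s7 {q k : ℕ} (hq : q ≠ 0) (hk : k ≠ 0) :
    ugcd k q = 1 ↔ Nset q k = ∅ := by
  rw [ugcd_eq_UD q k hq hk, UD_eq_one_iff (Nset_subset q k)]

lemma geom_aux (m n : ℕ) (hm : m ≠ 0) :
    ∑ k ∈ Finset.Icc 1 m, Complex.exp (2 * Real.pi * Complex.I * k * n / m)
      = if m ∣ n then (m : ℂ) else 0 := by
  have hm0 : (m : ℂ) ≠ 0 := Nat.cast_ne_zero.2 hm
  set z : ℂ := Complex.exp (2 * Real.pi * Complex.I * n / m) with hz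
  have hterm : ∀ k : ℕ, Complex.exp (2 * Real.pi * Complex.I * k * n / m) = z ^ k := by
    intro k
    rw [hz, ← Complex.exp_nat_mul]
    congr 1
    ring
  have hzm : z ^ m = 1 := by
    rw [hz, ← Complex.exp_nat_mul]
    have h1 : (m : ℂ) * (2 * Real.pi * Complex.I * n / m) = (n : ℤ) * (2 * Real.pi * Complex.I) := by
      push_cast
      field_simp
    rw [h1, Complex.exp_int_mul_two_pi_mul_I]
  by_cases hdvd : m ∣ n
  · obtain ⟨c, rfl⟩ := hdvd
    have hz1 : z = 1 := by
      have h1 : 2 * (Real.pi : ℂ) * Complex.I * ((m * c : ℕ) : ℂ) / m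
          = ((c : ℤ) : ℂ) * (2 * Real.pi * Complex.I) := by
        push_cast
        field_simp
      rw [hz, h1, Complex.exp_int_mul_two_pi_mul_I]
    simp only [hterm, hz1, one_pow, Finset.sum_const, Nat.card_Icc, if_pos (Dvd.intro c rfl)]
    simp
  · have hz1 : z ≠ 1 := by
      intro h
      rw [hz, Complex.exp_eq_one_iff] at h
      obtain ⟨j, hj⟩ := h
      have h2πI : (2 * (Real.pi : ℂ) * Complex.I) ≠ 0 := by
        simp [Real.pi_ne_zero, Complex.I_ne_zero]
      have hnm : (n : ℂ) = j * m := by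
        field_simp at hj
        have h3 : (n : ℂ) * (2 * Real.pi * Complex.I) = (j * m) * (2 * Real.pi * Complex.I) := by
          linear_combination (2 * Real.pi * Complex.I) * hj
        exact mul_right_cancel₀ h2πI h3
      have h4 : (n : ℤ) = j * m := by
        exact_mod_cast hnm
      exact hdvd (Int.natCast_dvd_natCast.1 ⟨j, by rw [h4]; ring⟩)
    rw [if_neg hdvd]
    simp only [hterm]
    rw [← Finset.Ico_add_one_right_eq_Icc, Finset.sum_Ico_eq_sum_range]
    simp only [Nat.add_sub_cancel]
    have h5 : ∀ i ∈ Finset.range m, z ^ (1 + i) = z * z ^ i := fun i _ => by rw [pow_add, pow_one]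
    rw [Finset.sum_congr rfl h5, ← Finset.mul_sum, geom_sum_eq hz1, hzm]
    simp

lemma sum_powerset_neg_one_pow_card_C {x : Finset ℕ} :
    (∑ m ∈ x.powerset, (-1 : ℂ) ^ m.card) = if x = ∅ then 1 else 0 := by
  have h := Finset.sum_powerset_neg_one_pow_card (x := x)
  have h2 : (∑ m ∈ x.powerset, (-1 : ℂ) ^ m.card)
      = ((∑ m ∈ x.powerset, (-1 : ℤ) ^ m.card : ℤ) : ℂ) := by push_cast; rfl
  rw [h2, h]
  split_ifs <;> simp

lemma innerSumAux (q n d : ℕ) (hq : q ≠ 0) (hd : d ∣ q) (hd0 : d ≠ 0) :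
    (∑ k ∈ Finset.Icc 1 q,
        if d ∣ k then Complex.exp (2 * Real.pi * Complex.I * k * n / q) else 0)
      = if (q / d) ∣ n then ((q / d : ℕ) : ℂ) else 0 := by
  have hm0 : q / d ≠ 0 := fun h => hq (by rw [← Nat.mul_div_cancel' hd, h, mul_zero])
  rw [← Finset.sum_filter]
  have hkey : ∑ k ∈ (Finset.Icc 1 q).filter (fun k => d ∣ k),
      Complex.exp (2 * Real.pi * Complex.I * k * n / q)
      = ∑ j ∈ Finset.Icc 1 (q / d),
      Complex.exp (2 * Real.pi * Complex.I * j * n / ((q / d : ℕ) : ℂ)) := by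
    refine (Finset.sum_nbij' (fun k => k / d) (fun j => d * j) ?_ ?_ ?_ ?_ ?_).symm.symm
    · intro k hk
      simp only [Finset.mem_filter, Finset.mem_Icc] at hk
      obtain ⟨⟨hk1, hk2⟩, hkd⟩ := hk
      simp only [Finset.mem_Icc]
      constructor
      · rw [Nat.one_le_div_iff (Nat.pos_of_ne_zero hd0)]
        exact Nat.le_of_dvd (by omega) hkd
      · exact Nat.div_le_div_right hk2
    · intro j hj
      simp only [Finset.mem_Icc] at hj
      simp only [Finset.mem_filter, Finset.mem_Icc]
      refine ⟨⟨?_, ?_⟩, Dvd.intro j rfl⟩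
      · exact Nat.one_le_iff_ne_zero.2 (mul_ne_zero hd0 (by omega))
      · calc d * j ≤ d * (q / d) := Nat.mul_le_mul_left d hj.2
          _ = q := Nat.mul_div_cancel' hd
    · intro k hk
      simp only [Finset.mem_filter] at hk
      exact Nat.mul_div_cancel' hk.2
    · intro j hj
      exact Nat.mul_div_cancel_left j (Nat.pos_of_ne_zero hd0)
    · intro k hk
      simp only [Finset.mem_filter] at hk
      obtain ⟨-, hkd⟩ := hk
      obtain ⟨j, rfl⟩ := hkd
      simp only [Nat.mul_div_cancel_left j (Nat.pos_of_ne_zero hd0)]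
      congr 1
      have hqd : (q : ℂ) = (d : ℂ) * ((q / d : ℕ) : ℂ) := by
        rw [← Nat.cast_mul, Nat.mul_div_cancel' hd]
      have hdC : (d : ℂ) ≠ 0 := Nat.cast_ne_zero.2 hd0
      have hmC : ((q / d : ℕ) : ℂ) ≠ 0 := Nat.cast_ne_zero.2 hm0
      rw [hqd]
      push_cast
      field_simp
  rw [hkey, geom_aux (q / d) n hm0]

lemma cstar_eq (q n : ℕ) (hq : q ≠ 0) (hn : n ≠ 0) :
    cstar q n = (-1) ^ ((q.primeFactors \ Nset q n).card) *
      ((∏ p ∈ Nset q n, (p ^ q.factorization p - 1) : ℕ) : ℂ) := by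
  set P := q.primeFactors with hP
  set N := Nset q n with hN
  -- Step 1: indicator
  have hind : ∀ k ∈ Finset.Icc 1 q,
      (if ugcd k q = 1 then Complex.exp (2 * Real.pi * Complex.I * k * n / q) else 0)
      = ∑ S ∈ P.powerset, (if UD q S ∣ k then
          (-1 : ℂ) ^ S.card * Complex.exp (2 * Real.pi * Complex.I * k * n / q) else 0) := by
    intro k hk
    have hk0 : k ≠ 0 := by
      simp only [Finset.mem_Icc] at hk; omega
    have hfilter : P.powerset.filter (fun S => UD q S ∣ k) = (Nset q k).powerset := by
      ext S
      simp only [Finset.mem_filter, Finset.mem_powerset]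
      constructor
      · rintro ⟨hSP, hdvd⟩
        intro p hp
        rw [Nset, Finset.mem_filter]
        exact ⟨hSP hp, (UD_dvd_iff hSP hk0).1 hdvd p hp⟩
      · intro hS
        have hSP : S ⊆ P := hS.trans (Nset_subset q k)
        exact ⟨hSP, (UD_dvd_iff hSP hk0).2 fun p hp => (Finset.mem_filter.1 (hS hp)).2⟩
    have hsum : ∑ S ∈ P.powerset, (if UD q S ∣ k then (-1 : ℂ) ^ S.card else 0)
        = if ugcd k q = 1 then 1 else 0 := by
      rw [← Finset.sum_filter, hfilter, sum_powerset_neg_one_pow_card_C]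
      by_cases h : ugcd k q = 1
      · rw [if_pos ((ugcd_eq_one_iff_s7 hq hk0).1 h), if_pos h]
      · rw [if_neg (fun he => h ((ugcd_eq_one_iff_s7 hq hk0).2 he)), if_neg h]
    calc (if ugcd k q = 1 then Complex.exp (2 * Real.pi * Complex.I * k * n / q) else 0)
        = (if ugcd k q = 1 then (1:ℂ) else 0)
            * Complex.exp (2 * Real.pi * Complex.I * k * n / q) := by
          split_ifs <;> simp
      _ = (∑ S ∈ P.powerset, (if UD q S ∣ k then (-1 : ℂ) ^ S.card else 0))
            * Complex.exp (2 * Real.pi * Complex.I * k * n / q) := by rw [hsum]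
      _ = _ := by
          rw [Finset.sum_mul]
          exact Finset.sum_congr rfl fun S _ => by split_ifs <;> simp
  -- Step 2: swap
  have hswap : cstar q n = ∑ S ∈ P.powerset, (-1 : ℂ) ^ S.card *
      ∑ k ∈ Finset.Icc 1 q, (if UD q S ∣ k then
        Complex.exp (2 * Real.pi * Complex.I * k * n / q) else 0) := by
    rw [cstar, Finset.sum_congr rfl hind, Finset.sum_comm]
    refine Finset.sum_congr rfl fun S _ => ?_
    rw [Finset.mul_sum]
    exact Finset.sum_congr rfl fun k _ => by split_ifs <;> simp
  -- Step 3: inner sums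
  have hstep3 : cstar q n = ∑ S ∈ P.powerset, (-1 : ℂ) ^ S.card *
      (if UD q (P \ S) ∣ n then ((UD q (P \ S) : ℕ) : ℂ) else 0) := by
    rw [hswap]
    refine Finset.sum_congr rfl fun S hS => ?_
    rw [Finset.mem_powerset] at hS
    rw [innerSumAux q n (UD q S) hq (UD_dvd_q hq hS) (UD_ne_zero hS), UD_div hq hS]
  -- Step 4: reindex by complement
  have hstep4 : cstar q n = ∑ T ∈ P.powerset, (-1 : ℂ) ^ (P \ T).card *
      (if UD q T ∣ n then ((UD q T : ℕ) : ℂ) else 0) := by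
    rw [hstep3]
    refine Finset.sum_nbij' (fun S => P \ S) (fun T => P \ T) ?_ ?_ ?_ ?_ ?_
    · intro S hS; exact Finset.mem_powerset.2 Finset.sdiff_subset
    · intro T hT; exact Finset.mem_powerset.2 Finset.sdiff_subset
    · intro S hS
      rw [Finset.mem_powerset] at hS
      show P \ (P \ S) = S
      rw [Finset.sdiff_sdiff_self_left, Finset.inter_eq_right.2 hS]
    · intro T hT
      rw [Finset.mem_powerset] at hT
      show P \ (P \ T) = T
      rw [Finset.sdiff_sdiff_self_left, Finset.inter_eq_right.2 hT]
    · intro S hS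
      rw [Finset.mem_powerset] at hS
      have hPS : P \ (P \ S) = S := by
        rw [Finset.sdiff_sdiff_self_left, Finset.inter_eq_right.2 hS]
      simp only [hPS]
  -- Step 5: restrict to subsets of N
  have hstep5 : cstar q n = ∑ T ∈ N.powerset, (-1 : ℂ) ^ (P \ T).card *
      ((UD q T : ℕ) : ℂ) := by
    rw [hstep4]
    rw [← Finset.sum_subset (Finset.powerset_mono.2 (Nset_subset q n))]
    · refine Finset.sum_congr rfl fun T hT => ?_
      rw [Finset.mem_powerset] at hT
      rw [if_pos]
      exact (UD_dvd_iff (hT.trans (Nset_subset q n)) hn).2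
        fun p hp => (Finset.mem_filter.1 (hT hp)).2
    · intro T hTP hTN
      rw [Finset.mem_powerset] at hTP
      rw [Finset.mem_powerset] at hTN
      rw [if_neg, mul_zero]
      intro hdvd
      exact hTN fun p hp => Finset.mem_filter.2
        ⟨hTP hp, (UD_dvd_iff hTP hn).1 hdvd p hp⟩
  -- Step 6: split off sign
  have hNP : N ⊆ P := Nset_subset q n
  have hcard : ∀ T ∈ N.powerset, (P \ T).card = (P \ N).card + (N \ T).card := by
    intro T hT
    rw [Finset.mem_powerset] at hT
    have hunion : P \ T = (P \ N) ∪ (N \ T) := by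
      ext p
      simp only [Finset.mem_sdiff, Finset.mem_union]
      constructor
      · rintro ⟨hp, hpT⟩
        by_cases hpN : p ∈ N
        · exact Or.inr ⟨hpN, hpT⟩
        · exact Or.inl ⟨hp, hpN⟩
      · rintro (⟨hp, hpN⟩ | ⟨hpN, hpT⟩)
        · exact ⟨hp, fun h => hpN (hT h)⟩
        · exact ⟨hNP hpN, hpT⟩
    have hdisj : Disjoint (P \ N) (N \ T) := by
      refine Finset.disjoint_left.2 ?_
      intro p hp1 hp2
      exact (Finset.mem_sdiff.1 hp1).2 (Finset.mem_sdiff.1 hp2).1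
    rw [hunion, Finset.card_union_of_disjoint hdisj]
  have hstep6 : cstar q n = (-1 : ℂ) ^ (P \ N).card *
      ∑ T ∈ N.powerset, (-1 : ℂ) ^ (N \ T).card * ((UD q T : ℕ) : ℂ) := by
    rw [hstep5, Finset.mul_sum]
    refine Finset.sum_congr rfl fun T hT => ?_
    rw [hcard T hT, pow_add, mul_assoc]
  -- Step 7: product formula
  have hstep7 : ∑ T ∈ N.powerset, (-1 : ℂ) ^ (N \ T).card * ((UD q T : ℕ) : ℂ)
      = ∏ p ∈ N, (((p ^ q.factorization p : ℕ) : ℂ) - 1) := by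
    rw [show (∏ p ∈ N, (((p ^ q.factorization p : ℕ) : ℂ) - 1))
        = ∏ p ∈ N, (((p ^ q.factorization p : ℕ) : ℂ) + (-1)) from
      Finset.prod_congr rfl fun p _ => by ring]
    rw [Finset.prod_add]
    refine Finset.sum_congr rfl fun T hT => ?_
    rw [Finset.prod_const, UD]
    push_cast
    ring
  -- Step 8: conclude
  rw [hstep6, hstep7]
  congr 1
  rw [Nat.cast_prod]
  refine Finset.prod_congr rfl fun p hp => ?_
  have hpp : p.Prime := Nat.prime_of_mem_primeFactors (hNP hp)
  have h1 : 1 ≤ p ^ q.factorization p := Nat.one_le_iff_ne_zero.2 (pow_ne_zero _ hpp.ne_zero)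
  rw [Nat.cast_sub h1, Nat.cast_one]

lemma abs_cstar_UD {q n : ℕ} (hq : q ≠ 0) (hn : n ≠ 0) {S : Finset ℕ}
    (hS : S ⊆ q.primeFactors) :
    ‖cstar (UD q S) n‖
      = ((∏ p ∈ S ∩ Nset q n, (p ^ q.factorization p - 1) : ℕ) : ℝ) := by
  have hd0 : UD q S ≠ 0 := UD_ne_zero hS
  rw [cstar_eq (UD q S) n hd0 hn]
  rw [norm_mul, norm_pow, norm_neg, norm_one, one_pow, one_mul, Complex.norm_natCast]
  congr 1
  have hfac : ∀ p ∈ S, (UD q S).factorization p = q.factorization p := by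
    intro p hp
    rw [UD_factorization hS p, if_pos hp]
  have hNd : Nset (UD q S) n = S ∩ Nset q n := by
    rw [Nset, UD_primeFactors hS]
    ext p
    simp only [Finset.mem_filter, Finset.mem_inter, Nset]
    constructor
    · rintro ⟨hp, hdvd⟩
      rw [hfac p hp] at hdvd
      exact ⟨hp, hS hp, hdvd⟩
    · rintro ⟨hp, -, hdvd⟩
      rw [← hfac p hp] at hdvd
      exact ⟨hp, hdvd⟩
  rw [hNd]
  refine Finset.prod_congr rfl fun p hp => ?_
  rw [hfac p (Finset.mem_inter.1 hp).1]

theorem stmt7 (q n : ℕ) (hq : 1 ≤ q) (hn : 1 ≤ n) :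
    ∑ d ∈ unitaryDivisors q, ‖cstar d n‖
      = 2 ^ omega (q / ugcd n q) * (ugcd n q : ℝ) := by
  have hq0 : q ≠ 0 := by omega
  have hn0 : n ≠ 0 := by omega
  set P := q.primeFactors with hP
  set N := Nset q n with hN
  have hNP : N ⊆ P := Nset_subset q n
  -- rewrite the sum over powersets
  have hinj : ∀ S ∈ P.powerset, ∀ T ∈ P.powerset, UD q S = UD q T → S = T := by
    intro S hS T hT h
    rw [Finset.mem_powerset] at hS hT
    rw [← UD_primeFactors hS, ← UD_primeFactors hT, h]
  rw [unitaryDivisors_eq_image q hq0, Finset.sum_image hinj]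
  -- the summand
  set f : ℕ → ℝ := fun p =>
    if p ^ q.factorization p ∣ n then ((p ^ q.factorization p : ℕ) : ℝ) - 1 else 1 with hf
  have hsummand : ∀ S ∈ P.powerset, ‖cstar (UD q S) n‖ = ∏ p ∈ S, f p := by
    intro S hS
    rw [Finset.mem_powerset] at hS
    rw [abs_cstar_UD hq0 hn0 hS]
    have hfilter : S.filter (fun p => p ^ q.factorization p ∣ n) = S ∩ N := by
      ext p
      simp only [Finset.mem_filter, Finset.mem_inter, hN, Nset]
      constructor
      · rintro ⟨hp, hdvd⟩; exact ⟨hp, hS hp, hdvd⟩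
      · rintro ⟨hp, -, hdvd⟩; exact ⟨hp, hdvd⟩
    rw [hf, Finset.prod_ite, Finset.prod_const_one, mul_one, hfilter, Nat.cast_prod]
    refine Finset.prod_congr rfl fun p hp => ?_
    have hpp : p.Prime := Nat.prime_of_mem_primeFactors (hS (Finset.mem_inter.1 hp).1)
    have h1 : 1 ≤ p ^ q.factorization p := Nat.one_le_iff_ne_zero.2 (pow_ne_zero _ hpp.ne_zero)
    rw [Nat.cast_sub h1, Nat.cast_one]
  rw [Finset.sum_congr rfl hsummand]
  -- sum over powerset = product
  have hprodsum : ∑ S ∈ P.powerset, ∏ p ∈ S, f p = ∏ p ∈ P, (f p + 1) := by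
    rw [Finset.prod_add]
    exact (Finset.sum_congr rfl fun T _ => by rw [Finset.prod_const_one, mul_one]).symm
  rw [hprodsum]
  -- split the product
  have hsplit : ∏ p ∈ P, (f p + 1)
      = (∏ p ∈ N, ((p ^ q.factorization p : ℕ) : ℝ)) * 2 ^ (P \ N).card := by
    rw [← Finset.prod_filter_mul_prod_filter_not P (fun p => p ^ q.factorization p ∣ n)]
    congr 1
    · refine Finset.prod_congr rfl fun p hp => ?_
      rw [hf]
      simp only [if_pos (Finset.mem_filter.1 hp).2]
      ring
    · have h2 : ∀ p ∈ P \ N, f p + 1 = 2 := by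
        intro p hp
        obtain ⟨hpP, hpN⟩ := Finset.mem_sdiff.1 hp
        have hnd : ¬ p ^ q.factorization p ∣ n := by
          intro hdvd
          exact hpN (Finset.mem_filter.2 ⟨hpP, hdvd⟩)
        rw [hf]
        simp only [hnd, if_false]
        norm_num
      rw [Finset.filter_not]
      have he : P \ Finset.filter (fun p => p ^ q.factorization p ∣ n) P = P \ N := rfl
      rw [he, Finset.prod_congr rfl h2, Finset.prod_const]
  rw [hsplit]
  have hug : ugcd n q = UD q N := ugcd_eq_UD q n hq0 hn0
  have homega : omega (q / ugcd n q) = (P \ N).card := by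
    rw [hug, UD_div hq0 hNP, omega, UD_primeFactors Finset.sdiff_subset]
  rw [homega, hug, UD, Nat.cast_prod]
  push_cast
  ring
end
end

section
/- For any q, n ∈ ℕ, Σ_{d ∣ q} |c_d(n)| = 2^{ω(q/(n,q))} · (n,q), where (n,q) = gcd(n,q). -/
open Complex Finset

noncomputable section

open ArithmeticFunction
open scoped ArithmeticFunction.Moebius ArithmeticFunction.zeta

/-! ### Auxiliary lemmas -/

lemma sum_mu' (m : ℕ) : ∑ e ∈ m.divisors, (μ e : ℤ) = if m = 1 then 1 else 0 := by
  have := congrArg (fun f : ArithmeticFunction ℤ => f m) moebius_mul_coe_zeta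
  simp only [coe_mul_zeta_apply] at this
  rw [this, one_apply]

lemma icc_map' (m : ℕ) : Finset.Icc 1 m
    = Finset.map ⟨fun j => j + 1, add_left_injective 1⟩ (Finset.range m) := by
  ext x
  simp only [Finset.mem_Icc, Finset.mem_map, Finset.mem_range, Function.Embedding.coeFn_mk]
  constructor
  · rintro ⟨h1, h2⟩; exact ⟨x - 1, by omega, by omega⟩
  · rintro ⟨j, hj, rfl⟩; omega

lemma geo' (m n : ℕ) (hm : m ≠ 0) :
    ∑ j ∈ Icc 1 m, Complex.exp (2 * Real.pi * Complex.I * n / m) ^ j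
      = if m ∣ n then (m : ℂ) else 0 := by
  have hprim := Complex.isPrimitiveRoot_exp m hm
  have hw : Complex.exp (2 * Real.pi * Complex.I * n / m)
      = Complex.exp (2 * Real.pi * Complex.I / m) ^ n := by
    rw [← Complex.exp_nat_mul]; congr 1; ring
  set w := Complex.exp (2 * Real.pi * Complex.I * n / m) with hwdef
  have hwm : w ^ m = 1 := by
    rw [hw, ← pow_mul, mul_comm n m, pow_mul, hprim.pow_eq_one, one_pow]
  by_cases h : m ∣ n
  · have hw1 : w = 1 := by rw [hw]; exact (hprim.pow_eq_one_iff_dvd n).mpr h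
    simp [hw1, h]
  · have hw1 : w ≠ 1 := by
      rw [hw]; exact fun hc => h ((hprim.pow_eq_one_iff_dvd n).mp hc)
    rw [if_neg h]
    have h0 : ∑ j ∈ Finset.range m, w ^ j = 0 := by
      rw [geom_sum_eq hw1 m, hwm, sub_self, zero_div]
    calc ∑ j ∈ Icc 1 m, w ^ j = w * ∑ j ∈ Finset.range m, w ^ j := by
          rw [Finset.mul_sum, icc_map' m, Finset.sum_map]
          exact Finset.sum_congr rfl fun j _ => by simp [pow_succ, mul_comm]
      _ = 0 := by rw [h0, mul_zero]

lemma sum_dvd_Icc' {M : Type*} [AddCommMonoid M] (g : ℕ → M) (d e : ℕ) (he : e ∣ d)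
    (he0 : e ≠ 0) :
    ∑ k ∈ Icc 1 d, (if e ∣ k then g k else 0) = ∑ j ∈ Icc 1 (d / e), g (e * j) := by
  rw [← Finset.sum_filter]
  apply Finset.sum_nbij' (i := fun k => k / e) (j := fun j => e * j)
  · intro k hk
    simp only [Finset.mem_filter, Finset.mem_Icc] at hk
    obtain ⟨⟨h1, h2⟩, hek⟩ := hk
    simp only [Finset.mem_Icc]
    constructor
    · exact Nat.one_le_div_iff (Nat.pos_of_ne_zero he0) |>.mpr (Nat.le_of_dvd (by omega) hek)
    · exact Nat.div_le_div_right h2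
  · intro j hj
    simp only [Finset.mem_Icc] at hj
    simp only [Finset.mem_filter, Finset.mem_Icc]
    refine ⟨⟨Nat.one_le_iff_ne_zero.mpr (Nat.mul_ne_zero he0 (by omega)), ?_⟩, Dvd.intro _ rfl⟩
    calc e * j ≤ e * (d / e) := Nat.mul_le_mul_left e hj.2
      _ = d := Nat.mul_div_cancel' he
  · intro k hk
    simp only [Finset.mem_filter] at hk
    exact Nat.mul_div_cancel' hk.2
  · intro j hj
    exact Nat.mul_div_cancel_left j (Nat.pos_of_ne_zero he0)
  · intro k hk
    simp only [Finset.mem_filter] at hk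
    rw [Nat.mul_div_cancel' hk.2]

/-- Ramanujan's identity: `c_d(n) = ∑_{e ∣ d, e ∣ n} e μ(d/e)`. -/
lemma cc_eq' (d n : ℕ) (hd : d ≠ 0) :
    cc d n = ∑ e ∈ d.divisors, (if e ∣ n then (e : ℂ) else 0) * (μ (d / e) : ℂ) := by
  set z : ℂ := Complex.exp (2 * Real.pi * Complex.I * n / d) with hzdef
  have hz : ∀ k : ℕ, Complex.exp (2 * Real.pi * Complex.I * k * n / d) = z ^ k := by
    intro k
    rw [hzdef, ← Complex.exp_nat_mul]
    congr 1; ring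
  have step1 : cc d n = ∑ k ∈ Icc 1 d, ∑ e ∈ d.divisors,
      (if e ∣ k then (μ e : ℂ) * z ^ k else 0) := by
    rw [cc]
    refine Finset.sum_congr rfl fun k hk => ?_
    have hfil : d.divisors.filter (· ∣ k) = (Nat.gcd k d).divisors := by
      ext e
      simp only [Finset.mem_filter, Nat.mem_divisors, Nat.dvd_gcd_iff]
      constructor
      · rintro ⟨⟨h1, -⟩, h2⟩; exact ⟨⟨h2, h1⟩, Nat.gcd_ne_zero_right hd⟩
      · rintro ⟨⟨h1, h2⟩, -⟩; exact ⟨⟨h2, hd⟩, h1⟩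
    have hsum : ∑ e ∈ d.divisors, (if e ∣ k then (μ e : ℂ) else 0)
        = if Nat.gcd k d = 1 then 1 else 0 := by
      rw [← Finset.sum_filter, hfil]
      have h2 : ((∑ e ∈ (Nat.gcd k d).divisors, (μ e : ℤ) : ℤ) : ℂ)
          = ((if Nat.gcd k d = 1 then 1 else 0 : ℤ) : ℂ) :=
        congrArg (Int.cast : ℤ → ℂ) (sum_mu' (Nat.gcd k d))
      push_cast at h2
      simpa using h2
    calc (if Nat.gcd k d = 1 then Complex.exp (2 * Real.pi * Complex.I * k * n / d) else 0)
        = (if Nat.gcd k d = 1 then (1:ℂ) else 0) * z ^ k := by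
          rw [hz k]; by_cases h : Nat.gcd k d = 1 <;> simp [h]
      _ = (∑ e ∈ d.divisors, (if e ∣ k then (μ e : ℂ) else 0)) * z ^ k := by rw [hsum]
      _ = ∑ e ∈ d.divisors, (if e ∣ k then (μ e : ℂ) * z ^ k else 0) := by
          rw [Finset.sum_mul]
          exact Finset.sum_congr rfl fun e _ => by rw [ite_mul, zero_mul]
  rw [step1, Finset.sum_comm]
  have step2 : ∀ e ∈ d.divisors,
      ∑ k ∈ Icc 1 d, (if e ∣ k then (μ e : ℂ) * z ^ k else 0)
        = (μ e : ℂ) * (if (d / e) ∣ n then ((d / e : ℕ) : ℂ) else 0) := by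
    intro e he
    rw [Nat.mem_divisors] at he
    obtain ⟨hed, -⟩ := he
    have he0 : e ≠ 0 := fun h => by subst h; exact hd (Nat.eq_zero_of_zero_dvd hed)
    set m := d / e with hm
    have hm0 : m ≠ 0 := by
      have := Nat.div_pos (Nat.le_of_dvd (Nat.pos_of_ne_zero hd) hed) (Nat.pos_of_ne_zero he0)
      omega
    have hdm : d = e * m := (Nat.mul_div_cancel' hed).symm
    have hze : z ^ e = Complex.exp (2 * Real.pi * Complex.I * n / m) := by
      rw [hzdef, ← Complex.exp_nat_mul]
      congr 1
      have hec : (e : ℂ) ≠ 0 := Nat.cast_ne_zero.mpr he0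
      have hmc : (m : ℂ) ≠ 0 := Nat.cast_ne_zero.mpr hm0
      have hdc : (d : ℂ) = e * m := by exact_mod_cast congrArg (Nat.cast : ℕ → ℂ) hdm
      rw [hdc]
      field_simp
    rw [sum_dvd_Icc' (fun k => (μ e : ℂ) * z ^ k) d e hed he0, ← hm]
    have hpow : ∀ j, z ^ (e * j) = Complex.exp (2 * Real.pi * Complex.I * n / m) ^ j := by
      intro j; rw [pow_mul, hze]
    simp_rw [hpow]
    rw [← Finset.mul_sum, geo' m n hm0]
  rw [Finset.sum_congr rfl step2]
  rw [← Nat.sum_divisorsAntidiagonal (fun a b => (μ a : ℂ) * (if b ∣ n then (b:ℂ) else 0)),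
    Nat.sum_divisorsAntidiagonal' (fun a b => (μ a : ℂ) * (if b ∣ n then (b:ℂ) else 0))]
  exact Finset.sum_congr rfl fun e _ => mul_comm _ _

/-! ### Arithmetic functions -/

def fd (n : ℕ) : ArithmeticFunction ℝ :=
  ⟨fun d => if d ∣ n then (d : ℝ) else 0, by simp⟩

def Rf (n : ℕ) : ArithmeticFunction ℝ := fd n * (μ : ArithmeticFunction ℝ)

lemma fd_apply (n d : ℕ) : fd n d = if d ∣ n then (d : ℝ) else 0 := rfl

lemma fd_mult (n : ℕ) : (fd n).IsMultiplicative := by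
  refine ⟨by simp [fd_apply], @fun a b hab => ?_⟩
  rw [fd_apply, fd_apply, fd_apply]
  by_cases ha : a ∣ n
  · by_cases hb : b ∣ n
    · rw [if_pos (hab.mul_dvd_of_dvd_of_dvd ha hb), if_pos ha, if_pos hb]; push_cast; ring
    · rw [if_neg fun h => hb (dvd_trans (dvd_mul_left b a) h), if_pos ha, if_neg hb, mul_zero]
  · rw [if_neg fun h => ha (dvd_trans (dvd_mul_right a b) h), if_neg ha, zero_mul]

lemma Rf_mult (n : ℕ) : (Rf n).IsMultiplicative :=
  (fd_mult n).mul (isMultiplicative_moebius.intCast)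

lemma Rf_apply (n d : ℕ) :
    Rf n d = ∑ e ∈ d.divisors, (if e ∣ n then (e : ℝ) else 0) * ((μ (d / e) : ℤ) : ℝ) := by
  rw [Rf, mul_apply, ← Nat.sum_divisorsAntidiagonal
    (fun a b => (if a ∣ n then (a : ℝ) else 0) * ((μ b : ℤ) : ℝ))]
  exact Finset.sum_congr rfl fun x _ => by rw [intCoe_apply]; rfl

def aRf (n : ℕ) : ArithmeticFunction ℝ := ⟨fun d => |Rf n d|, by simp⟩

lemma aRf_apply (n d : ℕ) : aRf n d = |Rf n d| := rfl

lemma aRf_mult (n : ℕ) : (aRf n).IsMultiplicative := by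
  refine ⟨by rw [aRf_apply, (Rf_mult n).map_one, abs_one], @fun a b hab => ?_⟩
  rw [aRf_apply, aRf_apply, aRf_apply, (Rf_mult n).map_mul_of_coprime hab, abs_mul]

lemma Rf_one (n : ℕ) : Rf n 1 = 1 := (Rf_mult n).map_one

def Hf (n : ℕ) : ArithmeticFunction ℝ :=
  ⟨fun q => if q = 0 then 0 else
    2 ^ ((q / Nat.gcd n q).primeFactors.card) * (Nat.gcd n q : ℝ), by simp⟩

lemma Hf_apply (n q : ℕ) (hq : q ≠ 0) :
    Hf n q = 2 ^ ((q / Nat.gcd n q).primeFactors.card) * (Nat.gcd n q : ℝ) := by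
  simp [Hf, hq]

lemma Hf_mult (n : ℕ) : (Hf n).IsMultiplicative := by
  constructor
  · simp [Hf]
  · intro a b hab
    rcases eq_or_ne a 0 with rfl | ha
    · have : b = 1 := by simpa [Nat.coprime_zero_left] using hab
      subst this
      simp [Hf]
    rcases eq_or_ne b 0 with rfl | hb
    · have : a = 1 := by simpa [Nat.coprime_zero_right] using hab
      subst this
      simp [Hf]
    have hg : Nat.gcd n (a * b) = Nat.gcd n a * Nat.gcd n b := hab.gcd_mul n
    have hga : Nat.gcd n a ∣ a := Nat.gcd_dvd_right n a
    have hgb : Nat.gcd n b ∣ b := Nat.gcd_dvd_right n b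
    have hdiv : a * b / (Nat.gcd n a * Nat.gcd n b) = (a / Nat.gcd n a) * (b / Nat.gcd n b) :=
      (Nat.div_mul_div_comm hga hgb).symm
    have ha' : a / Nat.gcd n a ≠ 0 :=
      (Nat.div_ne_zero_iff_of_dvd hga).mpr ⟨ha, Nat.gcd_ne_zero_right ha⟩
    have hb' : b / Nat.gcd n b ≠ 0 :=
      (Nat.div_ne_zero_iff_of_dvd hgb).mpr ⟨hb, Nat.gcd_ne_zero_right hb⟩
    have hcop : Nat.Coprime (a / Nat.gcd n a) (b / Nat.gcd n b) :=
      Nat.Coprime.coprime_dvd_left (Nat.div_dvd_of_dvd hga)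
        (Nat.Coprime.coprime_dvd_right (Nat.div_dvd_of_dvd hgb) hab)
    have hcard : ((a / Nat.gcd n a) * (b / Nat.gcd n b)).primeFactors.card
        = (a / Nat.gcd n a).primeFactors.card + (b / Nat.gcd n b).primeFactors.card := by
      rw [Nat.primeFactors_mul ha' hb',
        Finset.card_union_of_disjoint (Nat.Coprime.disjoint_primeFactors hcop)]
    have hab0 : a * b ≠ 0 := Nat.mul_ne_zero ha hb
    rw [Hf_apply n (a*b) hab0, Hf_apply n a ha, Hf_apply n b hb, hg, hdiv, hcard]
    push_cast
    ring

/-! ### Prime power computations -/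

lemma Rf_pp (n p m : ℕ) (hn : n ≠ 0) (hp : p.Prime) :
    Rf n (p ^ (m + 1)) = (if m + 1 ≤ n.factorization p then ((p:ℝ)) ^ (m+1) else 0)
      - (if m ≤ n.factorization p then ((p:ℝ)) ^ m else 0) := by
  rw [Rf_apply, Nat.sum_divisors_prime_pow hp]
  rw [Finset.sum_range_succ, Finset.sum_range_succ]
  have hz : ∀ t ∈ Finset.range m,
      (if p ^ t ∣ n then ((p ^ t : ℕ) : ℝ) else 0) * ((μ (p ^ (m+1) / p ^ t) : ℤ) : ℝ) = 0 := by
    intro t ht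
    rw [Finset.mem_range] at ht
    have e1 : t ≤ m + 1 := by omega
    have e2 : m + 1 - t ≠ 0 := by omega
    have e3 : m + 1 - t ≠ 1 := by omega
    rw [Nat.pow_div e1 hp.pos, moebius_apply_prime_pow hp e2, if_neg e3]
    simp
  rw [Finset.sum_eq_zero hz, zero_add]
  rw [Nat.pow_div (by omega : m ≤ m + 1) hp.pos, Nat.pow_div le_rfl hp.pos]
  have h1 : m + 1 - m = 1 := by omega
  have h2 : m + 1 - (m + 1) = 0 := by omega
  rw [h1, h2, pow_one, pow_zero, moebius_apply_prime hp, moebius_apply_one]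
  have hd1 : (p ^ m ∣ n) ↔ m ≤ n.factorization p :=
    Nat.Prime.pow_dvd_iff_le_factorization hp hn
  have hd2 : (p ^ (m+1) ∣ n) ↔ m + 1 ≤ n.factorization p :=
    Nat.Prime.pow_dvd_iff_le_factorization hp hn
  simp only [hd1, hd2]
  by_cases hA : m + 1 ≤ n.factorization p
  · rw [if_pos hA, if_pos (by omega), if_pos hA, if_pos (by omega)]; push_cast; ring
  · rw [if_neg hA, if_neg hA]
    by_cases hB : m ≤ n.factorization p
    · rw [if_pos hB, if_pos hB]; push_cast; ring
    · rw [if_neg hB, if_neg hB]; ring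

lemma sum_aRf_le (n p : ℕ) (hn : n ≠ 0) (hp : p.Prime) (i : ℕ) (hi : i ≤ n.factorization p) :
    ∑ j ∈ Finset.range (i+1), aRf n (p ^ j) = (p:ℝ) ^ i := by
  induction i with
  | zero => simp [aRf_apply, Rf_one]
  | succ k ih =>
    rw [Finset.sum_range_succ, ih (by omega)]
    rw [aRf_apply, Rf_pp n p k hn hp, if_pos hi, if_pos (by omega)]
    have hp1 : (1:ℝ) ≤ (p:ℝ) := by exact_mod_cast hp.one_le
    have hle : (p:ℝ)^k ≤ (p:ℝ)^(k+1) := pow_le_pow_right₀ hp1 (by omega)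
    rw [_root_.abs_of_nonneg (by linarith)]
    ring

lemma sum_aRf (n p i : ℕ) (hn : n ≠ 0) (hp : p.Prime) :
    ∑ j ∈ Finset.range (i+1), aRf n (p ^ j)
      = if i ≤ n.factorization p then (p:ℝ)^i else 2 * (p:ℝ)^(n.factorization p) := by
  set v := n.factorization p with hv
  by_cases h : i ≤ v
  · rw [if_pos h]; exact sum_aRf_le n p hn hp i h
  · rw [if_neg h]
    have hvi : v + 1 ≤ i + 1 := by omega
    rw [Finset.range_eq_Ico, ← Finset.sum_Ico_consecutive _ (Nat.zero_le (v+1)) hvi,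
      ← Finset.range_eq_Ico, sum_aRf_le n p hn hp v le_rfl]
    have hrest : ∑ j ∈ Finset.Ico (v+1) (i+1), aRf n (p ^ j)
        = ∑ j ∈ Finset.Ico (v+1) (i+1), (if j = v + 1 then (p:ℝ)^v else 0) := by
      refine Finset.sum_congr rfl fun j hj => ?_
      rw [Finset.mem_Ico] at hj
      obtain ⟨m, rfl⟩ : ∃ m, j = m + 1 := ⟨j - 1, by omega⟩
      rw [aRf_apply, Rf_pp n p m hn hp, if_neg (by omega)]
      by_cases hm : m = v
      · subst hm
        rw [if_pos le_rfl, if_pos rfl, zero_sub, abs_neg, _root_.abs_of_nonneg (by positivity)]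
      · rw [if_neg (by omega), if_neg (by omega), sub_zero, abs_zero]
    rw [hrest, Finset.sum_ite_eq' (Finset.Ico (v+1) (i+1)) (v+1) (fun _ => (p:ℝ)^v),
      if_pos (by rw [Finset.mem_Ico]; omega)]
    ring

lemma gcd_pp (n p i : ℕ) (hn : n ≠ 0) (hp : p.Prime) :
    Nat.gcd n (p ^ i) = p ^ min (n.factorization p) i := by
  apply Nat.dvd_antisymm
  · obtain ⟨t, ht, hgcd⟩ := (Nat.dvd_prime_pow hp).mp (Nat.gcd_dvd_right n (p ^ i))
    have h1 : p ^ t ∣ n := hgcd ▸ Nat.gcd_dvd_left n (p ^ i)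
    have htv : t ≤ n.factorization p := (Nat.Prime.pow_dvd_iff_le_factorization hp hn).mp h1
    rw [hgcd]
    exact pow_dvd_pow p (le_min htv ht)
  · exact Nat.dvd_gcd ((Nat.Prime.pow_dvd_iff_le_factorization hp hn).mpr (min_le_left _ _))
      (pow_dvd_pow p (min_le_right _ _))

lemma Hf_pp (n p i : ℕ) (hn : n ≠ 0) (hp : p.Prime) :
    Hf n (p ^ i) = if i ≤ n.factorization p then (p:ℝ)^i else 2 * (p:ℝ)^(n.factorization p) := by
  have hp0 : p ^ i ≠ 0 := pow_ne_zero i hp.pos.ne'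
  rw [Hf_apply n _ hp0, gcd_pp n p i hn hp]
  set v := n.factorization p with hv
  by_cases h : i ≤ v
  · rw [if_pos h, min_eq_right h, Nat.div_self (Nat.pos_of_ne_zero hp0)]
    simp
  · rw [if_neg h, min_eq_left (by omega), Nat.pow_div (by omega) hp.pos,
      Nat.primeFactors_prime_pow (by omega) hp]
    push_cast
    simp

/-! ### Main theorem -/

theorem stmt9 (q n : ℕ) (hq : 1 ≤ q) (hn : 1 ≤ n) :
    ∑ d ∈ q.divisors, ‖cc d n‖
      = 2 ^ omega (q / Nat.gcd n q) * (Nat.gcd n q : ℝ) := by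
  have hq0 : q ≠ 0 := by omega
  have hn0 : n ≠ 0 := by omega
  have habs : ∀ d ∈ q.divisors, ‖cc d n‖ = aRf n d := by
    intro d hd
    have hd0 : d ≠ 0 := (Nat.pos_of_mem_divisors hd).ne'
    have h1 : cc d n = ((Rf n d : ℝ) : ℂ) := by
      rw [cc_eq' d n hd0, Rf_apply]
      push_cast [apply_ite (Complex.ofReal : ℝ → ℂ)]
      rfl
    rw [h1, Complex.norm_real, Real.norm_eq_abs, aRf_apply]
  rw [Finset.sum_congr rfl habs]
  have hS : ∀ x, (aRf n * (ζ : ArithmeticFunction ℝ)) x = ∑ d ∈ x.divisors, aRf n d :=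
    fun x => coe_mul_zeta_apply
  have hSmult : (aRf n * (ζ : ArithmeticFunction ℝ)).IsMultiplicative :=
    (aRf_mult n).mul (isMultiplicative_zeta.natCast)
  have hEq : (aRf n * (ζ : ArithmeticFunction ℝ)) = Hf n := by
    rw [ArithmeticFunction.IsMultiplicative.eq_iff_eq_on_prime_powers _ hSmult _ (Hf_mult n)]
    intro p i hp
    rw [hS, Nat.sum_divisors_prime_pow hp, sum_aRf n p i hn0 hp, Hf_pp n p i hn0 hp]
  have := congrArg (fun f : ArithmeticFunction ℝ => f q) hEq
  simp only [hS] at this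
  rw [this, Hf_apply n q hq0]
  rfl
end
end

section
/- For any prime p, Σ_{k=1}^{p²} c*_p(k) · c*_{p²}(k) = p²(p − 1); in particular this sum is nonzero, so the unitary Ramanujan sums do not satisfy the orthogonality relation that holds for classical Ramanujan sums. -/
open Complex Finset

noncomputable section

lemma ugcd_prime_pow {p : ℕ} (hp : p.Prime) {ν : ℕ} (hν : 0 < ν) (k : ℕ) :
    ugcd k (p ^ ν) = if p ^ ν ∣ k then p ^ ν else 1 := by
  have hq0 : p ^ ν ≠ 0 := pow_ne_zero _ hp.pos.ne'
  have hfilter : ((p ^ ν).divisors.filter (fun d => d ∣ k ∧ Nat.Coprime d (p ^ ν / d)))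
      = if p ^ ν ∣ k then ({1, p ^ ν} : Finset ℕ) else {1} := by
    ext d
    simp only [Finset.mem_filter, Nat.mem_divisors, hq0, ne_eq, not_false_eq_true, and_true]
    constructor
    · rintro ⟨hd, hdk, hcop⟩
      obtain ⟨i, hi, rfl⟩ := (Nat.dvd_prime_pow hp).mp hd
      have : i = 0 ∨ i = ν := by
        by_contra h
        push_neg at h
        have hi0 : 0 < i := Nat.pos_of_ne_zero h.1
        have hiν : i < ν := lt_of_le_of_ne hi h.2
        have hquot : p ^ ν / p ^ i = p ^ (ν - i) := Nat.pow_div hi hp.pos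
        have h1 : p ∣ p ^ i := dvd_pow_self p hi0.ne'
        have h2 : p ∣ p ^ ν / p ^ i := by
          rw [hquot]; exact dvd_pow_self p (Nat.sub_pos_of_lt hiν).ne'
        have hp1 : p ∣ 1 := hcop ▸ Nat.dvd_gcd h1 h2
        exact hp.one_lt.ne' (Nat.dvd_one.mp hp1)
      rcases this with rfl | rfl
      · simp only [pow_zero]
        split <;> simp
      · simp [hdk]
    · intro hd
      by_cases hk : p ^ ν ∣ k <;> simp only [hk, if_true, if_false,
          Finset.mem_insert, Finset.mem_singleton] at hd ⊢
      · rcases hd with rfl | rfl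
        · exact ⟨one_dvd _, one_dvd _, Nat.coprime_one_left _⟩
        · refine ⟨dvd_rfl, hk, ?_⟩
          rw [Nat.div_self (Nat.pos_of_ne_zero hq0)]
          exact Nat.coprime_one_right _
      · subst hd
        exact ⟨one_dvd _, one_dvd _, Nat.coprime_one_left _⟩
  unfold ugcd
  rw [hfilter]
  split
  · rw [Finset.sup_insert, Finset.sup_singleton]
    simp [Nat.one_le_iff_ne_zero.mpr hq0]
  · simp

lemma expsum (q n : ℕ) (hq : 0 < q) :
    (∑ k ∈ Finset.Icc 1 q, Complex.exp (2 * Real.pi * Complex.I * k * n / q))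
      = if q ∣ n then (q : ℂ) else 0 := by
  have hq0 : (q : ℂ) ≠ 0 := Nat.cast_ne_zero.mpr hq.ne'
  set ζ : ℂ := Complex.exp (2 * Real.pi * Complex.I * n / q) with hζdef
  have hterm : ∀ k : ℕ, Complex.exp (2 * Real.pi * Complex.I * k * n / q) = ζ ^ k := by
    intro k
    rw [hζdef, ← Complex.exp_nat_mul]
    congr 1
    ring
  have hsum : (∑ k ∈ Finset.Icc 1 q, Complex.exp (2 * Real.pi * Complex.I * k * n / q))
      = ∑ k ∈ Finset.Icc 1 q, ζ ^ k := by
    exact Finset.sum_congr rfl fun k _ => hterm k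
  rw [hsum]
  by_cases hdvd : q ∣ n
  · obtain ⟨m, rfl⟩ := hdvd
    have hζ1 : ζ = 1 := by
      rw [hζdef]
      rw [Complex.exp_eq_one_iff]
      exact ⟨m, by push_cast; field_simp⟩
    simp [hζ1, Nat.card_Icc]
  · have hζ1 : ζ ≠ 1 := by
      intro h
      rw [hζdef, Complex.exp_eq_one_iff] at h
      obtain ⟨m, hm⟩ := h
      have hpi : (2 : ℂ) * Real.pi * Complex.I ≠ 0 := by
        simp [Real.pi_ne_zero, Complex.I_ne_zero]
      have : (n : ℂ) = m * q := by
        field_simp at hm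
        have h2 : (2 : ℂ) * Real.pi * Complex.I * n = 2 * Real.pi * Complex.I * (m * q) := by
          rw [hm]; ring
        exact mul_left_cancel₀ hpi h2
      have hZ : (n : ℤ) = m * q := by exact_mod_cast this
      have : (q : ℤ) ∣ (n : ℤ) := ⟨m, by linarith⟩
      exact hdvd (Int.natCast_dvd_natCast.mp this)
    have hζq : ζ ^ q = 1 := by
      rw [hζdef, ← Complex.exp_nat_mul, Complex.exp_eq_one_iff]
      exact ⟨n, by field_simp; norm_cast⟩
    have : Finset.Icc 1 q = Finset.Ico 1 (q + 1) := by
      rw [Finset.Ico_add_one_right_eq_Icc]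
    rw [this, geom_sum_Ico hζ1 (by omega), if_neg hdvd]
    rw [pow_succ, hζq]
    simp

lemma cstar_prime_pow {p : ℕ} (hp : p.Prime) {ν : ℕ} (hν : 0 < ν) (n : ℕ) :
    cstar (p ^ ν) n = (if p ^ ν ∣ n then ((p : ℂ) ^ ν) else 0) - 1 := by
  have hq1 : 1 < p ^ ν := Nat.one_lt_pow hν.ne' hp.one_lt
  have hq0 : 0 < p ^ ν := by omega
  unfold cstar
  have hsplit : ∀ k ∈ Finset.Icc 1 (p ^ ν),
      (if ugcd k (p ^ ν) = 1 then Complex.exp (2 * Real.pi * Complex.I * k * n / (p ^ ν : ℕ)) else 0)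
      = Complex.exp (2 * Real.pi * Complex.I * k * n / (p ^ ν : ℕ))
        - (if k = p ^ ν then Complex.exp (2 * Real.pi * Complex.I * k * n / (p ^ ν : ℕ)) else 0) := by
    intro k hk
    rw [Finset.mem_Icc] at hk
    rw [ugcd_prime_pow hp hν]
    by_cases hdk : p ^ ν ∣ k
    · have hkq : k = p ^ ν := Nat.le_antisymm hk.2 (Nat.le_of_dvd (by omega) hdk)
      simp [hdk, hkq, hq1.ne', hp.ne_one, hν.ne']
    · have hkq : k ≠ p ^ ν := fun h => hdk (h ▸ dvd_rfl)
      simp [hdk, hkq, hq1.ne']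
  rw [Finset.sum_congr rfl hsplit, Finset.sum_sub_distrib, expsum _ _ hq0,
    Finset.sum_ite_eq' _ (p ^ ν)]
  have hmem : p ^ ν ∈ Finset.Icc 1 (p ^ ν) := Finset.mem_Icc.mpr ⟨by omega, le_rfl⟩
  rw [if_pos hmem]
  have : Complex.exp (2 * Real.pi * Complex.I * (p ^ ν : ℕ) * n / (p ^ ν : ℕ)) = 1 := by
    rw [Complex.exp_eq_one_iff]
    refine ⟨n, ?_⟩
    have h0 : ((p : ℂ) ^ ν) ≠ 0 := pow_ne_zero _ (Nat.cast_ne_zero.mpr hp.pos.ne')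
    push_cast
    field_simp
  rw [this]
  push_cast
  rfl

theorem stmt11 (p : ℕ) (hp : p.Prime) :
    (∑ k ∈ Finset.Icc 1 (p ^ 2), cstar p k * cstar (p ^ 2) k) = (p : ℂ) ^ 2 * ((p : ℂ) - 1)
    ∧ (∑ k ∈ Finset.Icc 1 (p ^ 2), cstar p k * cstar (p ^ 2) k) ≠ 0 := by
  have h1 : ∀ k, cstar p k = (if p ∣ k then (p : ℂ) else 0) - 1 := by
    intro k
    have := cstar_prime_pow hp (ν := 1) one_pos k
    simpa using this
  have h2 : ∀ k, cstar (p ^ 2) k = (if p ^ 2 ∣ k then (p : ℂ) ^ 2 else 0) - 1 := by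
    intro k
    have := cstar_prime_pow hp (ν := 2) two_pos k
    simpa using this
  have hpt : ∀ k, cstar p k * cstar (p ^ 2) k =
      (if p ^ 2 ∣ k then (p : ℂ) ^ 3 else 0) - (if p ∣ k then (p : ℂ) else 0)
      - (if p ^ 2 ∣ k then (p : ℂ) ^ 2 else 0) + 1 := by
    intro k
    rw [h1, h2]
    by_cases h2k : p ^ 2 ∣ k
    · have h1k : p ∣ k := dvd_trans (dvd_pow_self p two_ne_zero) h2k
      simp only [h2k, h1k, if_true]
      ring
    · by_cases h1k : p ∣ k <;> simp only [h2k, h1k, if_true, if_false] <;> ring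
  have count : ∀ d : ℕ, ∀ c : ℂ, (∑ k ∈ Finset.Icc 1 (p ^ 2), if d ∣ k then c else 0)
      = ((p ^ 2 / d : ℕ) : ℂ) * c := by
    intro d c
    have hIcc : Finset.Icc 1 (p ^ 2) = Finset.Ioc 0 (p ^ 2) := by
      ext x
      simp
      omega
    rw [← Finset.sum_filter, Finset.sum_const, hIcc,
      Nat.Ioc_filter_dvd_card_eq_div, nsmul_eq_mul]
  have hmain : (∑ k ∈ Finset.Icc 1 (p ^ 2), cstar p k * cstar (p ^ 2) k)
      = (p : ℂ) ^ 2 * ((p : ℂ) - 1) := by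
    rw [Finset.sum_congr rfl (fun k _ => hpt k)]
    rw [Finset.sum_add_distrib, Finset.sum_sub_distrib, Finset.sum_sub_distrib,
      count, count, count, Finset.sum_const, Nat.card_Icc]
    have e1 : p ^ 2 / p = p := by
      rw [pow_two, Nat.mul_div_cancel_left _ hp.pos]
    have e2 : p ^ 2 / p ^ 2 = 1 := Nat.div_self (pow_pos hp.pos 2)
    rw [e1, e2]
    push_cast
    ring
  refine ⟨hmain, hmain ▸ ?_⟩
  have hp0 : (p : ℂ) ≠ 0 := Nat.cast_ne_zero.mpr hp.pos.ne'
  have hp1 : (p : ℂ) - 1 ≠ 0 := by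
    rw [sub_ne_zero]
    exact_mod_cast hp.one_lt.ne'
  exact mul_ne_zero (pow_ne_zero _ hp0) hp1
end
end

section
/- For any q₁, q₂, n ∈ ℕ with lcm(q₁,q₂) ∣ n, (1/n) Σ_{k=1}^{n} c_{q₁}(k) c_{q₂}(k) equals φ(q) if q₁ = q₂ = q, and 0 if q₁ ≠ q₂. -/
open Complex Finset

noncomputable section


private lemma geomIcc (z : ℂ) (n : ℕ) (hn : 1 ≤ n) (hz : z ^ n = 1) :
    ∑ k ∈ Finset.Icc 1 n, z ^ k = if z = 1 then (n : ℂ) else 0 := by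
  split_ifs with h
  · subst h; simp
  · have h1 : Finset.Icc 1 n = Finset.Ico 1 (n + 1) := by
      ext x; simp [Nat.lt_succ_iff]
    have h2 := geom_sum_Ico_mul z (show 1 ≤ n + 1 by omega)
    rw [pow_succ, hz, one_mul, pow_one, sub_self] at h2
    rw [h1]
    have hz1 : z - 1 ≠ 0 := sub_ne_zero.mpr h
    rcases mul_eq_zero.mp h2 with h3 | h3
    · exact h3
    · exact absurd h3 hz1

private lemma expDvd (m Q : ℕ) (hQ : Q ≠ 0) :
    Complex.exp (2 * Real.pi * Complex.I * m / Q) = 1 ↔ Q ∣ m := by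
  rw [Complex.exp_eq_one_iff]
  have hQ' : (Q : ℂ) ≠ 0 := Nat.cast_ne_zero.mpr hQ
  have hpi : (Real.pi : ℂ) ≠ 0 := by exact_mod_cast Real.pi_ne_zero
  constructor
  · rintro ⟨k, hk⟩
    have h2 : (2 * Real.pi * Complex.I : ℂ) ≠ 0 :=
      mul_ne_zero (mul_ne_zero two_ne_zero hpi) Complex.I_ne_zero
    have hm : (m : ℂ) = k * Q := by
      have h3 : 2 * (Real.pi : ℂ) * Complex.I * (m : ℂ)
          = 2 * (Real.pi : ℂ) * Complex.I * ((k : ℂ) * Q) := by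
        field_simp at hk
        linear_combination (2 * (Real.pi : ℂ) * Complex.I) * hk
      exact mul_left_cancel₀ h2 h3
    have hm' : (m : ℤ) = k * Q := by exact_mod_cast hm
    have : (Q : ℤ) ∣ (m : ℤ) := ⟨k, by linarith⟩
    exact_mod_cast this
  · rintro ⟨t, rfl⟩
    refine ⟨t, ?_⟩
    push_cast
    field_simp

private lemma innerSum (q a : ℕ) (hq : 1 ≤ q)
    (ha1 : 1 ≤ a) (ha2 : a ≤ q) (hag : Nat.gcd a q = 1) :
    ∑ b ∈ (Finset.Icc 1 q).filter (fun x => Nat.gcd x q = 1),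
      (if q ∣ a + b then (1 : ℂ) else 0) = 1 := by
  rw [Finset.sum_boole]
  rcases eq_or_lt_of_le hq with h | h
  · have hq1 : q = 1 := h.symm
    subst hq1
    have ha : a = 1 := by omega
    subst ha
    norm_num
  · have haq : a < q := by
      rcases eq_or_lt_of_le ha2 with h' | h'
      · subst h'; rw [Nat.gcd_self] at hag; omega
      · exact h'
    have hset : ((Finset.Icc 1 q).filter (fun x => Nat.gcd x q = 1)).filter
        (fun b => q ∣ a + b) = {q - a} := by
      ext b
      simp only [Finset.mem_filter, Finset.mem_Icc, Finset.mem_singleton]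
      constructor
      · rintro ⟨⟨⟨hb1, hb2⟩, hbg⟩, ⟨c, hc⟩⟩
        have hc0 : c ≠ 0 := by rintro rfl; omega
        have hc2 : c < 2 := by
          by_contra hcc
          have : q * 2 ≤ q * c := Nat.mul_le_mul_left _ (by omega)
          omega
        have hc1 : c = 1 := by omega
        subst hc1; omega
      · rintro rfl
        have hgcd : Nat.gcd (q - a) q = 1 := by
          have h2 : Nat.gcd (q - a) q = Nat.gcd (q - a) a := by
            rw [← Nat.gcd_add_self_right (q - a) a]
            congr 1
            omega
          rw [h2, Nat.gcd_sub_self_left ha2, Nat.gcd_comm]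
          exact hag
        exact ⟨⟨⟨by omega, by omega⟩, hgcd⟩, ⟨1, by omega⟩⟩
    rw [hset]
    simp

private lemma cardA (q : ℕ) (hq : 1 ≤ q) :
    ((Finset.Icc 1 q).filter (fun x => Nat.gcd x q = 1)).card = Nat.totient q := by
  rcases eq_or_lt_of_le hq with h | h
  · have : q = 1 := h.symm
    subst this
    decide
  · rw [Nat.totient_eq_card_coprime]
    congr 1
    ext x
    simp only [Finset.mem_filter, Finset.mem_Icc, Finset.mem_range]
    constructor
    · rintro ⟨⟨h1, h2⟩, h3⟩
      have hx : x ≠ q := by rintro rfl; rw [Nat.gcd_self] at h3; omega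
      exact ⟨by omega, Nat.coprime_comm.mp h3⟩
    · rintro ⟨h1, h2⟩
      have hx : x ≠ 0 := by
        rintro rfl
        rw [Nat.coprime_zero_right] at h2
        omega
      exact ⟨⟨by omega, by omega⟩, Nat.coprime_comm.mp h2⟩

private lemma countLemma (q₁ q₂ : ℕ) (hq₁ : 1 ≤ q₁) (hq₂ : 1 ≤ q₂) :
    ∑ a ∈ (Finset.Icc 1 q₁).filter (fun x => Nat.gcd x q₁ = 1),
      ∑ b ∈ (Finset.Icc 1 q₂).filter (fun x => Nat.gcd x q₂ = 1),
        (if q₁ * q₂ ∣ a * q₂ + b * q₁ then (1 : ℂ) else 0)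
      = if q₁ = q₂ then (Nat.totient q₁ : ℂ) else 0 := by
  split_ifs with h
  · subst h
    have hstep : ∀ a ∈ (Finset.Icc 1 q₁).filter (fun x => Nat.gcd x q₁ = 1),
        ∑ b ∈ (Finset.Icc 1 q₁).filter (fun x => Nat.gcd x q₁ = 1),
          (if q₁ * q₁ ∣ a * q₁ + b * q₁ then (1 : ℂ) else 0) = 1 := by
      intro a ha
      simp only [Finset.mem_filter, Finset.mem_Icc] at ha
      have hcond : ∀ b : ℕ, (q₁ * q₁ ∣ a * q₁ + b * q₁) ↔ q₁ ∣ a + b := by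
        intro b
        rw [show a * q₁ + b * q₁ = (a + b) * q₁ by ring]
        exact Nat.mul_dvd_mul_iff_right (by omega)
      simp only [hcond]
      exact innerSum q₁ a hq₁ ha.1.1 ha.1.2 ha.2
    rw [Finset.sum_congr rfl hstep, Finset.sum_const, nsmul_eq_mul, mul_one,
      cardA q₁ hq₁]
  · rw [Finset.sum_eq_zero]
    intro a ha
    rw [Finset.sum_eq_zero]
    intro b hb
    rw [if_neg]
    intro hdvd
    simp only [Finset.mem_filter, Finset.mem_Icc] at ha hb
    apply h
    have h1 : q₁ ∣ a * q₂ := by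
      have hx : q₁ ∣ a * q₂ + b * q₁ := dvd_trans (dvd_mul_right q₁ q₂) hdvd
      have hy : q₁ ∣ b * q₁ := dvd_mul_left q₁ b
      have := Nat.dvd_sub hx hy
      simpa using this
    have h2 : q₂ ∣ b * q₁ := by
      have hx : q₂ ∣ a * q₂ + b * q₁ := dvd_trans (dvd_mul_left q₂ q₁) hdvd
      have hy : q₂ ∣ a * q₂ := dvd_mul_left q₂ a
      have := Nat.dvd_sub hx hy
      simpa using this
    have hd1 : q₁ ∣ q₂ := (Nat.coprime_comm.mp ha.2).dvd_of_dvd_mul_left h1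
    have hd2 : q₂ ∣ q₁ := (Nat.coprime_comm.mp hb.2).dvd_of_dvd_mul_left h2
    exact Nat.dvd_antisymm hd1 hd2


theorem stmt12 (q₁ q₂ n : ℕ) (hq₁ : 1 ≤ q₁) (hq₂ : 1 ≤ q₂) (hn : 1 ≤ n)
    (hd : Nat.lcm q₁ q₂ ∣ n) :
    (1 / (n : ℂ)) * ∑ k ∈ Finset.Icc 1 n, cc q₁ k * cc q₂ k
      = if q₁ = q₂ then (Nat.totient q₁ : ℂ) else 0 := by
  have hq₁0 : (q₁ : ℂ) ≠ 0 := Nat.cast_ne_zero.mpr (by omega)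
  have hq₂0 : (q₂ : ℂ) ≠ 0 := Nat.cast_ne_zero.mpr (by omega)
  have hn0 : (n : ℂ) ≠ 0 := Nat.cast_ne_zero.mpr (by omega)
  have hQne : q₁ * q₂ ≠ 0 := by positivity
  obtain ⟨c₁, hc₁⟩ : q₁ ∣ n := dvd_trans (Nat.dvd_lcm_left _ _) hd
  obtain ⟨c₂, hc₂⟩ : q₂ ∣ n := dvd_trans (Nat.dvd_lcm_right _ _) hd
  have hcc : ∀ q k : ℕ, cc q k = ∑ a ∈ (Finset.Icc 1 q).filter (fun x => Nat.gcd x q = 1),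
      Complex.exp (2 * Real.pi * Complex.I * a * k / q) := by
    intro q k
    rw [cc, Finset.sum_filter]
  have step1 : ∑ k ∈ Finset.Icc 1 n, cc q₁ k * cc q₂ k
      = ∑ k ∈ Finset.Icc 1 n,
          ∑ a ∈ (Finset.Icc 1 q₁).filter (fun x => Nat.gcd x q₁ = 1),
          ∑ b ∈ (Finset.Icc 1 q₂).filter (fun x => Nat.gcd x q₂ = 1),
          (Complex.exp (2 * Real.pi * Complex.I * ((a * q₂ + b * q₁ : ℕ) : ℂ)
            / ((q₁ * q₂ : ℕ) : ℂ))) ^ k := by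
    refine Finset.sum_congr rfl fun k hk => ?_
    rw [hcc q₁ k, hcc q₂ k, Finset.sum_mul_sum]
    refine Finset.sum_congr rfl fun a ha => Finset.sum_congr rfl fun b hb => ?_
    rw [← Complex.exp_nat_mul, ← Complex.exp_add]
    congr 1
    push_cast
    field_simp
  have step2 : ∀ (a b : ℕ),
      ∑ k ∈ Finset.Icc 1 n,
        (Complex.exp (2 * Real.pi * Complex.I * ((a * q₂ + b * q₁ : ℕ) : ℂ)
          / ((q₁ * q₂ : ℕ) : ℂ))) ^ k
      = if q₁ * q₂ ∣ a * q₂ + b * q₁ then (n : ℂ) else 0 := by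
    intro a b
    have hdv : q₁ * q₂ ∣ n * (a * q₂ + b * q₁) := by
      have hA : q₁ * q₂ ∣ a * q₂ * n := ⟨a * c₁, by rw [hc₁]; ring⟩
      have hB : q₁ * q₂ ∣ b * q₁ * n := ⟨b * c₂, by rw [hc₂]; ring⟩
      have := dvd_add hA hB
      rwa [show a * q₂ * n + b * q₁ * n = n * (a * q₂ + b * q₁) by ring] at this
    have hz : (Complex.exp (2 * Real.pi * Complex.I * ((a * q₂ + b * q₁ : ℕ) : ℂ)
        / ((q₁ * q₂ : ℕ) : ℂ))) ^ n = 1 := by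
      rw [← Complex.exp_nat_mul]
      have := (expDvd (n * (a * q₂ + b * q₁)) (q₁ * q₂) hQne).mpr hdv
      rw [← this]
      congr 1
      push_cast
      field_simp
    rw [geomIcc _ n hn hz]
    simp only [expDvd _ _ hQne]
  rw [step1]
  rw [Finset.sum_comm]
  have step3 : ∀ a, ∑ k ∈ Finset.Icc 1 n,
      ∑ b ∈ (Finset.Icc 1 q₂).filter (fun x => Nat.gcd x q₂ = 1),
        (Complex.exp (2 * Real.pi * Complex.I * ((a * q₂ + b * q₁ : ℕ) : ℂ)
          / ((q₁ * q₂ : ℕ) : ℂ))) ^ k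
      = ∑ b ∈ (Finset.Icc 1 q₂).filter (fun x => Nat.gcd x q₂ = 1),
          (if q₁ * q₂ ∣ a * q₂ + b * q₁ then (n : ℂ) else 0) := by
    intro a
    rw [Finset.sum_comm]
    exact Finset.sum_congr rfl fun b _ => step2 a b
  simp only [step3]
  have step4 : ∑ a ∈ (Finset.Icc 1 q₁).filter (fun x => Nat.gcd x q₁ = 1),
      ∑ b ∈ (Finset.Icc 1 q₂).filter (fun x => Nat.gcd x q₂ = 1),
        (if q₁ * q₂ ∣ a * q₂ + b * q₁ then (n : ℂ) else 0)
      = (n : ℂ) * ∑ a ∈ (Finset.Icc 1 q₁).filter (fun x => Nat.gcd x q₁ = 1),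
          ∑ b ∈ (Finset.Icc 1 q₂).filter (fun x => Nat.gcd x q₂ = 1),
            (if q₁ * q₂ ∣ a * q₂ + b * q₁ then (1 : ℂ) else 0) := by
    rw [Finset.mul_sum]
    refine Finset.sum_congr rfl fun a _ => ?_
    rw [Finset.mul_sum]
    refine Finset.sum_congr rfl fun b _ => ?_
    split_ifs <;> simp
  rw [step4, ← mul_assoc, one_div, inv_mul_cancel₀ hn0, one_mul,
    countLemma q₁ q₂ hq₁ hq₂]
end
end

section
/- For every n ∈ ℕ, σ(n)/n = ζ(2) Σ_{q ≥ 1} φ₂(q) c*_q(n) / q⁴, with the series absolutely convergent, where φ₂(q) = q² Π_{p ∣ q} (1 − 1/p²) is the Jordan totient of order 2. -/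
open Complex Finset

noncomputable section

/-- The Jordan totient `φ_s(n) = n^s ∏_{p ∣ n} (1 - 1/p^s)` of real order `s`. -/
def jordan (s : ℝ) (n : ℕ) : ℝ :=
  (n : ℝ) ^ s * ∏ p ∈ n.primeFactors, (1 - 1 / (p : ℝ) ^ s)

namespace Aux16

lemma prod_primePow_dvd_iff (k : ℕ) (e : ℕ → ℕ) (S : Finset ℕ) (hS : ∀ p ∈ S, p.Prime) :
    (∏ p ∈ S, p ^ e p) ∣ k ↔ ∀ p ∈ S, p ^ e p ∣ k := by
  classical
  revert hS
  induction S using Finset.induction_on with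
  | empty => simp
  | @insert a s has ih =>
    intro hS
    have hap : a.Prime := hS a (mem_insert_self a s)
    have hcop : Nat.Coprime (a ^ e a) (∏ p ∈ s, p ^ e p) := by
      apply Nat.Coprime.pow_left
      apply Nat.Coprime.prod_right
      intro p hp
      refine Nat.Coprime.pow_right _ ?_
      exact (Nat.coprime_primes hap (hS p (mem_insert_of_mem hp))).mpr
        (by rintro rfl; exact has hp)
    rw [Finset.prod_insert has]
    constructor
    · intro h p hp
      rcases mem_insert.mp hp with rfl | hp'
      · exact dvd_trans (dvd_mul_right _ _) h
      · exact dvd_trans (dvd_trans (Finset.dvd_prod_of_mem (fun p => p ^ e p) hp') (dvd_mul_left _ _)) h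
    · intro h
      exact Nat.Coprime.mul_dvd_of_dvd_of_dvd hcop (h a (mem_insert_self a s))
        ((ih (fun p hp => hS p (mem_insert_of_mem hp))).mpr
          (fun p hp => h p (mem_insert_of_mem hp)))

lemma expsum (m n : ℕ) (hm : 0 < m) :
    ∑ k ∈ Finset.Icc 1 m, Complex.exp (2 * Real.pi * Complex.I * k * n / m)
      = if m ∣ n then (m : ℂ) else 0 := by
  have hm0 : (m : ℂ) ≠ 0 := Nat.cast_ne_zero.mpr hm.ne'
  set z : ℂ := Complex.exp (2 * Real.pi * Complex.I * n / m) with hz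
  have hzk : ∀ k : ℕ, Complex.exp (2 * Real.pi * Complex.I * k * n / m) = z ^ k := by
    intro k
    rw [hz, ← Complex.exp_nat_mul]
    congr 1
    ring
  have hIcc : ∑ k ∈ Finset.Icc 1 m, Complex.exp (2 * Real.pi * Complex.I * k * n / m)
      = z * ∑ k ∈ Finset.range m, z ^ k := by
    rw [Finset.mul_sum]
    rw [show Finset.Icc 1 m = Finset.Ico 1 (m + 1) by rw [Finset.Ico_add_one_right_eq_Icc]]
    rw [Finset.sum_Ico_eq_sum_range]
    simp only [Nat.add_sub_cancel]
    refine Finset.sum_congr rfl fun k _ => ?_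
    rw [hzk (1 + k)]
    ring
  by_cases hdvd : m ∣ n
  · obtain ⟨c, rfl⟩ := hdvd
    have hz1 : z = 1 := by
      rw [hz, show 2 * Real.pi * Complex.I * (m * c : ℕ) / m = (c : ℤ) * (2 * Real.pi * Complex.I) by
        push_cast; field_simp]
      exact Complex.exp_int_mul_two_pi_mul_I c
    rw [if_pos ⟨c, rfl⟩, hIcc, hz1]
    simp
  · have hz1 : z ≠ 1 := by
      intro h
      rw [hz, Complex.exp_eq_one_iff] at h
      obtain ⟨t, ht⟩ := h
      have h2 : (2 * Real.pi * Complex.I) ≠ 0 := by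
        simp [Real.pi_ne_zero, Complex.I_ne_zero]
      have hnm : (n : ℂ) = (t : ℂ) * m := by
        field_simp at ht
        exact mul_left_cancel₀ h2 (by rw [ht]; ring)
      have : (n : ℤ) = t * m := by exact_mod_cast hnm
      exact hdvd (Int.natCast_dvd_natCast.mp ⟨t, by rw [this]; ring⟩)
    have hzm : z ^ m = 1 := by
      rw [hz, ← Complex.exp_nat_mul]
      rw [show (m : ℂ) * (2 * Real.pi * Complex.I * n / m) = (n : ℤ) * (2 * Real.pi * Complex.I) by
        push_cast; field_simp]
      exact Complex.exp_int_mul_two_pi_mul_I n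
    rw [hIcc, geom_sum_eq hz1, hzm]
    simp [hdvd]


lemma ugcd_eq_one_iff {k q : ℕ} (hq : q ≠ 0) :
    ugcd k q = 1 ↔ ∀ p ∈ q.primeFactors, ¬ (p ^ q.factorization p ∣ k) := by
  classical
  constructor
  · intro h p hp hdvd
    have hpp : p.Prime := Nat.prime_of_mem_primeFactors hp
    have hv : q.factorization p ≠ 0 :=
      (Nat.Prime.factorization_pos_of_dvd hpp hq (Nat.dvd_of_mem_primeFactors hp)).ne'
    set d := p ^ q.factorization p with hd
    have hdmem : d ∈ (q.divisors).filter (fun d => d ∣ k ∧ Nat.Coprime d (q / d)) := by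
      refine Finset.mem_filter.mpr ⟨Nat.mem_divisors.mpr ⟨Nat.ordProj_dvd q p, hq⟩, hdvd, ?_⟩
      exact Nat.Coprime.pow_left _ (Nat.coprime_ordCompl hpp hq)
    have hle : d ≤ ugcd k q := Finset.le_sup (f := id) hdmem
    have : 2 ≤ d := (Nat.one_lt_pow hv hpp.one_lt)
    omega
  · intro h
    apply le_antisymm
    · apply Finset.sup_le
      intro d hd
      rcases Finset.mem_filter.mp hd with ⟨hdvds, hdk, hcop⟩
      rcases Nat.mem_divisors.mp hdvds with ⟨hdq, -⟩
      by_contra hlt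
      have hd1 : d ≠ 1 := by intro he; rw [he] at hlt; exact hlt le_rfl
      obtain ⟨p, hpp, hpd⟩ := Nat.exists_prime_and_dvd hd1
      have hpP : p ∈ q.primeFactors :=
        Nat.mem_primeFactors.mpr ⟨hpp, hpd.trans hdq, hq⟩
      have hd0 : d ≠ 0 := (Nat.pos_of_mem_divisors hdvds).ne'
      have hqd0 : q / d ≠ 0 := (Nat.div_pos (Nat.le_of_dvd (Nat.pos_of_ne_zero hq) hdq)
        (Nat.pos_of_ne_zero hd0)).ne'
      have hfac : q.factorization p = d.factorization p := by
        have hqd : d * (q / d) = q := Nat.mul_div_cancel' hdq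
        have := Nat.factorization_mul hd0 hqd0
        rw [hqd] at this
        rw [this]
        simp only [Finsupp.add_apply]
        have : (q / d).factorization p = 0 := by
          apply Nat.factorization_eq_zero_of_not_dvd
          intro hpqd
          have : p ∣ Nat.gcd d (q / d) := Nat.dvd_gcd hpd hpqd
          rw [Nat.Coprime.gcd_eq_one hcop] at this
          exact hpp.one_lt.ne' (Nat.dvd_one.mp this)
        omega
      refine h p hpP ?_
      rw [hfac]
      exact (Nat.ordProj_dvd d p).trans hdk
    · have h1 : (1 : ℕ) ∈ (q.divisors).filter (fun d => d ∣ k ∧ Nat.Coprime d (q / d)) := by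
        refine Finset.mem_filter.mpr ⟨Nat.one_mem_divisors.mpr hq, one_dvd _, ?_⟩
        exact Nat.coprime_one_left _
      exact Finset.le_sup (f := id) h1

/-- product of the unitary prime-power parts indexed by `S` -/
def dd (q : ℕ) (S : Finset ℕ) : ℕ := ∏ p ∈ S, p ^ q.factorization p

lemma dd_prime (S : Finset ℕ) (q : ℕ) (hS : S ⊆ q.primeFactors) :
    ∀ p ∈ S, p.Prime := fun p hp => Nat.prime_of_mem_primeFactors (hS hp)

lemma dd_pos {q : ℕ} (S : Finset ℕ) (hS : S ⊆ q.primeFactors) : 0 < dd q S := by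
  apply Finset.prod_pos
  intro p hp
  exact Nat.pow_pos (Nat.prime_of_mem_primeFactors (hS hp)).pos

lemma dd_univ {q : ℕ} (hq : q ≠ 0) : dd q q.primeFactors = q := by
  unfold dd
  rw [← Nat.support_factorization]
  exact Nat.factorization_prod_pow_eq_self hq

lemma dd_mul_compl {q : ℕ} (S : Finset ℕ) (hS : S ⊆ q.primeFactors) (hq : q ≠ 0) :
    dd q S * dd q (q.primeFactors \ S) = q := by
  unfold dd
  rw [mul_comm, Finset.prod_sdiff hS]
  exact dd_univ hq

lemma dd_dvd {q : ℕ} (S : Finset ℕ) (hS : S ⊆ q.primeFactors) (hq : q ≠ 0) :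
    dd q S ∣ q := ⟨_, (dd_mul_compl S hS hq).symm⟩

lemma q_div_dd {q : ℕ} (S : Finset ℕ) (hS : S ⊆ q.primeFactors) (hq : q ≠ 0) :
    q / dd q S = dd q (q.primeFactors \ S) := by
  exact Nat.div_eq_of_eq_mul_left (dd_pos S hS)
    (((dd_mul_compl S hS hq).symm).trans (mul_comm _ _))

lemma dd_dvd_iff {q k : ℕ} (S : Finset ℕ) (hS : S ⊆ q.primeFactors) :
    dd q S ∣ k ↔ ∀ p ∈ S, p ^ q.factorization p ∣ k :=
  prod_primePow_dvd_iff k _ S (dd_prime S q hS)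


lemma sum_dvd_exp {q d : ℕ} (n : ℕ) (hq : q ≠ 0) (hd : d ∣ q) :
    ∑ k ∈ Finset.Icc 1 q,
        (if d ∣ k then Complex.exp (2 * Real.pi * Complex.I * k * n / q) else 0)
      = if (q / d) ∣ n then ((q / d : ℕ) : ℂ) else 0 := by
  classical
  have hd0 : 0 < d := Nat.pos_of_dvd_of_pos hd (Nat.pos_of_ne_zero hq)
  set m := q / d with hmdef
  have hq' : d * m = q := Nat.mul_div_cancel' hd
  have hm0 : 0 < m := Nat.div_pos (Nat.le_of_dvd (Nat.pos_of_ne_zero hq) hd) hd0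
  rw [← expsum m n hm0, ← Finset.sum_filter]
  refine Finset.sum_nbij' (fun k => k / d) (fun j => j * d) ?_ ?_ ?_ ?_ ?_
  · intro k hk
    rcases Finset.mem_filter.mp hk with ⟨hk1, hdk⟩
    rcases Finset.mem_Icc.mp hk1 with ⟨h1k, hkq⟩
    refine Finset.mem_Icc.mpr ⟨(Nat.one_le_div_iff hd0).mpr (Nat.le_of_dvd h1k hdk), ?_⟩
    exact Nat.div_le_div_right hkq
  · intro j hj
    rcases Finset.mem_Icc.mp hj with ⟨h1j, hjm⟩
    refine Finset.mem_filter.mpr ⟨Finset.mem_Icc.mpr ⟨?_, ?_⟩, Dvd.intro_left j rfl⟩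
    · exact Nat.one_le_iff_ne_zero.mpr (Nat.mul_ne_zero (by omega) hd0.ne')
    · calc j * d ≤ m * d := Nat.mul_le_mul_right d hjm
        _ = q := by rw [mul_comm]; exact hq'
  · intro k hk
    exact Nat.div_mul_cancel (Finset.mem_filter.mp hk).2
  · intro j _
    exact Nat.mul_div_cancel j hd0
  · intro k hk
    rcases Finset.mem_filter.mp hk with ⟨-, hdk⟩
    obtain ⟨j, rfl⟩ := hdk
    simp only [Nat.mul_div_cancel_left j hd0]
    congr 1
    have hdC : (d : ℂ) ≠ 0 := Nat.cast_ne_zero.mpr hd0.ne'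
    have hmC : (m : ℂ) ≠ 0 := Nat.cast_ne_zero.mpr hm0.ne'
    rw [← hq']
    push_cast
    field_simp

lemma indicator_ugcd {q : ℕ} (hq : q ≠ 0) (k : ℕ) :
    (if ugcd k q = 1 then (1:ℂ) else 0)
      = ∑ S ∈ q.primeFactors.powerset, (-1 : ℂ) ^ S.card * (if dd q S ∣ k then 1 else 0) := by
  classical
  set Qk := q.primeFactors.filter (fun p => p ^ q.factorization p ∣ k) with hQk
  have h1 : ∀ S ∈ q.primeFactors.powerset,
      (-1 : ℂ) ^ S.card * (if dd q S ∣ k then (1:ℂ) else 0)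
        = if S ∈ Qk.powerset then (-1:ℂ)^S.card else 0 := by
    intro S hS
    have hSP : S ⊆ q.primeFactors := Finset.mem_powerset.mp hS
    by_cases h : dd q S ∣ k
    · rw [if_pos h, mul_one, if_pos]
      refine Finset.mem_powerset.mpr fun p hp => ?_
      exact Finset.mem_filter.mpr ⟨hSP hp, (dd_dvd_iff S hSP).mp h p hp⟩
    · rw [if_neg h, mul_zero, if_neg]
      intro hmem
      exact h ((dd_dvd_iff S hSP).mpr fun p hp =>
        (Finset.mem_filter.mp (Finset.mem_powerset.mp hmem hp)).2)
  rw [Finset.sum_congr rfl h1, Finset.sum_ite_mem,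
    Finset.inter_eq_right.mpr (Finset.powerset_mono.mpr (Finset.filter_subset _ _))]
  have hcast : ∑ S ∈ Qk.powerset, (-1:ℂ)^S.card
      = ((∑ S ∈ Qk.powerset, (-1:ℤ)^S.card : ℤ) : ℂ) := by
    push_cast
    rfl
  rw [hcast, Finset.sum_powerset_neg_one_pow_card]
  have hiff : ugcd k q = 1 ↔ Qk = ∅ := by
    rw [ugcd_eq_one_iff hq, hQk, Finset.filter_eq_empty_iff]
  by_cases h : Qk = ∅
  · rw [if_pos h, if_pos (hiff.mpr h)]
    norm_num
  · rw [if_neg h, if_neg (fun hc => h (hiff.mp hc))]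
    norm_num

lemma prod_ind {q : ℕ} (n : ℕ) (T : Finset ℕ) (hT : T ⊆ q.primeFactors) :
    ∏ p ∈ T, (if p ^ q.factorization p ∣ n then ((p ^ q.factorization p : ℕ) : ℂ) else 0)
      = if dd q T ∣ n then ((dd q T : ℕ) : ℂ) else 0 := by
  classical
  by_cases h : dd q T ∣ n
  · rw [if_pos h]
    have hall : ∀ p ∈ T, p ^ q.factorization p ∣ n := (dd_dvd_iff T hT).mp h
    rw [Finset.prod_congr rfl (fun p hp => if_pos (hall p hp))]
    rw [← Nat.cast_prod]
    rfl
  · rw [if_neg h]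
    obtain ⟨p0, hp0, hnd⟩ : ∃ p ∈ T, ¬ p ^ q.factorization p ∣ n := by
      by_contra hc
      push_neg at hc
      exact h ((dd_dvd_iff T hT).mpr hc)
    exact Finset.prod_eq_zero hp0 (if_neg hnd)

lemma cstar_eq_prod {q : ℕ} (n : ℕ) (hq : q ≠ 0) :
    cstar q n = ∏ p ∈ q.primeFactors,
      ((if p ^ q.factorization p ∣ n then ((p ^ q.factorization p : ℕ) : ℂ) else 0) + (-1)) := by
  classical
  rw [Finset.prod_add]
  unfold cstar
  have e1 : ∀ k ∈ Finset.Icc 1 q,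
      (if ugcd k q = 1 then Complex.exp (2 * Real.pi * Complex.I * k * n / q) else 0)
        = ∑ S ∈ q.primeFactors.powerset,
            (-1 : ℂ) ^ S.card *
              (if dd q S ∣ k then Complex.exp (2 * Real.pi * Complex.I * k * n / q) else 0) := by
    intro k _
    have h0 : (if ugcd k q = 1 then Complex.exp (2 * Real.pi * Complex.I * k * n / q) else 0)
        = (if ugcd k q = 1 then (1:ℂ) else 0) * Complex.exp (2 * Real.pi * Complex.I * k * n / q) := by
      by_cases h : ugcd k q = 1 <;> simp [h]
    rw [h0, indicator_ugcd hq k, Finset.sum_mul]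
    refine Finset.sum_congr rfl fun S _ => ?_
    by_cases h : dd q S ∣ k <;> simp [h, mul_assoc]
  rw [Finset.sum_congr rfl e1, Finset.sum_comm]
  have e2 : ∀ S ∈ q.primeFactors.powerset,
      (∑ k ∈ Finset.Icc 1 q, (-1:ℂ)^S.card *
          (if dd q S ∣ k then Complex.exp (2 * Real.pi * Complex.I * k * n / q) else 0))
        = (-1:ℂ)^S.card *
            (if dd q (q.primeFactors \ S) ∣ n then ((dd q (q.primeFactors \ S) : ℕ) : ℂ) else 0) := by
    intro S hS
    have hSP : S ⊆ q.primeFactors := Finset.mem_powerset.mp hS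
    rw [← Finset.mul_sum, sum_dvd_exp n hq (dd_dvd S hSP hq), q_div_dd S hSP hq]
  rw [Finset.sum_congr rfl e2]
  refine Finset.sum_nbij' (fun S => q.primeFactors \ S) (fun S => q.primeFactors \ S)
    ?_ ?_ ?_ ?_ ?_
  · intro S _
    exact Finset.mem_powerset.mpr (Finset.sdiff_subset)
  · intro S _
    exact Finset.mem_powerset.mpr (Finset.sdiff_subset)
  · intro S hS
    exact Finset.sdiff_sdiff_eq_self (Finset.mem_powerset.mp hS)
  · intro S hS
    exact Finset.sdiff_sdiff_eq_self (Finset.mem_powerset.mp hS)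
  · intro S hS
    have hSP : S ⊆ q.primeFactors := Finset.mem_powerset.mp hS
    rw [prod_ind n (q.primeFactors \ S) (Finset.sdiff_subset),
      Finset.sdiff_sdiff_eq_self hSP, Finset.prod_const]
    ring


/-- local factor of `cstar` -/
def cfac (n q p : ℕ) : ℂ :=
  (if p ^ q.factorization p ∣ n then ((p ^ q.factorization p : ℕ) : ℂ) else 0) + (-1)

lemma cstar_eq_prod' {q : ℕ} (n : ℕ) (hq : q ≠ 0) :
    cstar q n = ∏ p ∈ q.primeFactors, cfac n q p := cstar_eq_prod n hq

lemma cstar_one (n : ℕ) : cstar 1 n = 1 := by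
  rw [cstar_eq_prod' n one_ne_zero]
  simp

lemma norm_cstar_le {q : ℕ} (n : ℕ) (hq : q ≠ 0) (hn : n ≠ 0) :
    ‖cstar q n‖ ≤ (n : ℝ) := by
  classical
  rw [cstar_eq_prod' n hq, norm_prod]
  set P := q.primeFactors with hP
  have hle : ∀ p ∈ P, ‖cfac n q p‖ ≤ (if p ^ q.factorization p ∣ n then ((p ^ q.factorization p : ℕ) : ℝ) else 1) := by
    intro p hp
    unfold cfac
    by_cases h : p ^ q.factorization p ∣ n
    · rw [if_pos h, if_pos h]
      have h1 : 1 ≤ p ^ q.factorization p :=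
        Nat.one_le_iff_ne_zero.mpr (pow_ne_zero _ (Nat.prime_of_mem_primeFactors hp).pos.ne')
      have : ((p ^ q.factorization p : ℕ) : ℂ) + (-1) = ((p ^ q.factorization p - 1 : ℕ) : ℂ) := by
        push_cast [Nat.cast_sub h1]
        ring
      rw [this, Complex.norm_natCast]
      exact_mod_cast Nat.sub_le _ 1
    · rw [if_neg h, if_neg h]
      simp
  calc ∏ p ∈ P, ‖cfac n q p‖
      ≤ ∏ p ∈ P, (if p ^ q.factorization p ∣ n then ((p ^ q.factorization p : ℕ) : ℝ) else 1) :=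
        Finset.prod_le_prod (fun p _ => norm_nonneg _) hle
    _ = ((dd q (P.filter (fun p => p ^ q.factorization p ∣ n)) : ℕ) : ℝ) := by
        rw [← Finset.prod_filter]
        unfold dd
        push_cast
        rfl
    _ ≤ (n : ℝ) := by
        have hdvd : dd q (P.filter (fun p => p ^ q.factorization p ∣ n)) ∣ n := by
          refine (dd_dvd_iff _ (Finset.filter_subset _ _)).mpr fun p hp => ?_
          exact (Finset.mem_filter.mp hp).2
        exact_mod_cast Nat.le_of_dvd (Nat.pos_of_ne_zero hn) hdvd

lemma cstar_mul {a b : ℕ} (n : ℕ) (hab : Nat.Coprime a b) (ha : a ≠ 0) (hb : b ≠ 0) :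
    cstar (a * b) n = cstar a n * cstar b n := by
  classical
  rw [cstar_eq_prod' n (Nat.mul_ne_zero ha hb), cstar_eq_prod' n ha, cstar_eq_prod' n hb,
    Nat.primeFactors_mul ha hb,
    Finset.prod_union (Nat.Coprime.disjoint_primeFactors hab)]
  congr 1
  · refine Finset.prod_congr rfl fun p hp => ?_
    have hfb : b.factorization p = 0 := by
      apply Nat.factorization_eq_zero_of_not_dvd
      intro hpb
      have hpa : p ∣ a := Nat.dvd_of_mem_primeFactors hp
      have : p ∣ Nat.gcd a b := Nat.dvd_gcd hpa hpb
      rw [hab] at this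
      exact (Nat.prime_of_mem_primeFactors hp).one_lt.ne' (Nat.dvd_one.mp this)
    unfold cfac
    rw [Nat.factorization_mul ha hb]
    simp [hfb]
  · refine Finset.prod_congr rfl fun p hp => ?_
    have hfa : a.factorization p = 0 := by
      apply Nat.factorization_eq_zero_of_not_dvd
      intro hpa
      have hpb : p ∣ b := Nat.dvd_of_mem_primeFactors hp
      have : p ∣ Nat.gcd a b := Nat.dvd_gcd hpa hpb
      rw [hab] at this
      exact (Nat.prime_of_mem_primeFactors hp).one_lt.ne' (Nat.dvd_one.mp this)
    unfold cfac
    rw [Nat.factorization_mul ha hb]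
    simp [hfa]

lemma cstar_prime_pow {p : ℕ} (hp : p.Prime) {a : ℕ} (ha : a ≠ 0) (n : ℕ) :
    cstar (p ^ a) n = (if p ^ a ∣ n then ((p ^ a : ℕ) : ℂ) else 0) + (-1) := by
  rw [cstar_eq_prod' n (pow_ne_zero a hp.pos.ne'), Nat.primeFactors_prime_pow ha hp,
    Finset.prod_singleton]
  unfold cfac
  rw [Nat.Prime.factorization_pow hp, Finsupp.single_eq_same]

lemma jordan_two (m : ℕ) :
    jordan 2 m = (m : ℝ) ^ (2:ℕ) * ∏ p ∈ m.primeFactors, (1 - 1 / (p : ℝ) ^ (2:ℕ)) := by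
  unfold jordan
  rw [show (2:ℝ) = ((2:ℕ):ℝ) by norm_num]
  rw [Real.rpow_natCast]
  congr 1
  refine Finset.prod_congr rfl fun p _ => ?_
  rw [Real.rpow_natCast]

lemma jordan_one : jordan 2 1 = 1 := by
  rw [jordan_two]
  simp

lemma jordan_nonneg (m : ℕ) : 0 ≤ jordan 2 m := by
  rw [jordan_two]
  apply mul_nonneg (by positivity)
  apply Finset.prod_nonneg
  intro p hp
  have h2 : (2:ℝ) ≤ (p:ℝ) := by exact_mod_cast (Nat.prime_of_mem_primeFactors hp).two_le
  have : 1 / (p:ℝ)^(2:ℕ) ≤ 1 := by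
    rw [div_le_one (by positivity)]
    nlinarith
  linarith

lemma jordan_le_sq (m : ℕ) : jordan 2 m ≤ (m : ℝ) ^ (2:ℕ) := by
  rw [jordan_two]
  have h1 : ∏ p ∈ m.primeFactors, (1 - 1 / (p : ℝ) ^ (2:ℕ)) ≤ 1 := by
    apply Finset.prod_le_one
    · intro p hp
      have h2 : (2:ℝ) ≤ (p:ℝ) := by exact_mod_cast (Nat.prime_of_mem_primeFactors hp).two_le
      have : 1 / (p:ℝ)^(2:ℕ) ≤ 1 := by
        rw [div_le_one (by positivity)]
        nlinarith
      linarith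
    · intro p hp
      have h2 : (2:ℝ) ≤ (p:ℝ) := by exact_mod_cast (Nat.prime_of_mem_primeFactors hp).two_le
      have : 0 ≤ 1 / (p:ℝ)^(2:ℕ) := by positivity
      linarith
  calc (m : ℝ) ^ (2:ℕ) * ∏ p ∈ m.primeFactors, (1 - 1 / (p : ℝ) ^ (2:ℕ))
      ≤ (m : ℝ) ^ (2:ℕ) * 1 := by
        apply mul_le_mul_of_nonneg_left h1 (by positivity)
    _ = (m : ℝ) ^ (2:ℕ) := mul_one _

lemma jordan_mul {a b : ℕ} (hab : Nat.Coprime a b) (ha : a ≠ 0) (hb : b ≠ 0) :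
    jordan 2 (a * b) = jordan 2 a * jordan 2 b := by
  rw [jordan_two, jordan_two, jordan_two, Nat.primeFactors_mul ha hb,
    Finset.prod_union (Nat.Coprime.disjoint_primeFactors hab)]
  push_cast
  ring

lemma jordan_prime_pow {p : ℕ} (hp : p.Prime) {a : ℕ} (ha : a ≠ 0) :
    jordan 2 (p ^ a) = ((p ^ a : ℕ) : ℝ) ^ (2:ℕ) * (1 - 1 / (p : ℝ) ^ (2:ℕ)) := by
  rw [jordan_two, Nat.primeFactors_prime_pow ha hp, Finset.prod_singleton]


/-- The summand, as a function on all of `ℕ`. -/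
def FF (n : ℕ) : ℕ → ℂ := fun q => ((jordan 2 q : ℝ) : ℂ) * cstar q n / ((q : ℕ) : ℂ) ^ 4

lemma FF_zero (n : ℕ) : FF n 0 = 0 := by
  unfold FF
  simp

lemma FF_one (n : ℕ) : FF n 1 = 1 := by
  unfold FF
  rw [jordan_one, cstar_one]
  simp

lemma FF_mul (n : ℕ) {a b : ℕ} (hab : Nat.Coprime a b) : FF n (a * b) = FF n a * FF n b := by
  rcases eq_or_ne a 0 with rfl | ha
  · rw [zero_mul, FF_zero, zero_mul]
  rcases eq_or_ne b 0 with rfl | hb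
  · rw [mul_zero, FF_zero, mul_zero]
  unfold FF
  rw [cstar_mul n hab ha hb, jordan_mul hab ha hb]
  push_cast
  ring

lemma FF_norm_le (n : ℕ) (hn : n ≠ 0) (q : ℕ) : ‖FF n q‖ ≤ (n : ℝ) * (1 / (q:ℝ)^2) := by
  rcases eq_or_ne q 0 with rfl | hq
  · rw [FF_zero]
    simp
  have hq0 : (0:ℝ) < (q:ℝ) := by exact_mod_cast Nat.pos_of_ne_zero hq
  have h1 : ‖((jordan 2 q : ℝ) : ℂ)‖ = jordan 2 q := by
    rw [Complex.norm_real]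
    exact Real.norm_of_nonneg (jordan_nonneg q)
  have h2 : ‖cstar q n‖ ≤ (n:ℝ) := norm_cstar_le n hq hn
  have h3 : ‖((q:ℕ):ℂ)^4‖ = (q:ℝ)^4 := by
    rw [norm_pow, Complex.norm_natCast]
  have hcalc : ‖FF n q‖ = jordan 2 q * ‖cstar q n‖ / (q:ℝ)^4 := by
    unfold FF
    rw [norm_div, norm_mul, h1, h3]
  rw [hcalc]
  have hb : jordan 2 q * ‖cstar q n‖ ≤ (q:ℝ)^2 * (n:ℝ) := by
    apply mul_le_mul (jordan_le_sq q) h2 (norm_nonneg _) (by positivity)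
  calc jordan 2 q * ‖cstar q n‖ / (q:ℝ)^4 ≤ (q:ℝ)^2 * (n:ℝ) / (q:ℝ)^4 := by
        apply div_le_div_of_nonneg_right hb (by positivity) |>.trans_eq rfl
    _ = (n : ℝ) * (1 / (q:ℝ)^2) := by
        field_simp

lemma FF_summable_norm (n : ℕ) (hn : n ≠ 0) : Summable (fun q => ‖FF n q‖) := by
  apply Summable.of_nonneg_of_le (fun q => norm_nonneg _) (FF_norm_le n hn)
  exact (Real.summable_one_div_nat_pow.mpr (by norm_num)).mul_left _

lemma FF_local (n : ℕ) (hn : n ≠ 0) {p : ℕ} (hp : p.Prime) :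
    ∑' e : ℕ, FF n (p ^ e)
      = (1 - 1/(p:ℂ)^2) * ∑ a ∈ Finset.range (n.factorization p + 1), (1/(p:ℂ))^a := by
  classical
  have hp0 : (p:ℂ) ≠ 0 := Nat.cast_ne_zero.mpr hp.pos.ne'
  set v := n.factorization p with hv
  set x : ℂ := 1/(p:ℂ)^2 with hx
  set y : ℂ := 1/(p:ℂ) with hy
  have hxn : ‖x‖ < 1 := by
    rw [hx]
    rw [norm_div, norm_one, norm_pow, Complex.norm_natCast]
    have h2 : (2:ℝ) ≤ (p:ℝ) := by exact_mod_cast hp.two_le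
    rw [div_lt_one (by nlinarith)]
    nlinarith
  have hx1 : (1:ℂ) - x ≠ 0 := by
    intro h
    have : x = 1 := by linear_combination -h
    rw [this] at hxn
    simp at hxn
  set g1 : ℕ → ℂ := fun e => if e = 0 then 1 else if e ≤ v then (1-x)*y^e else 0 with hg1
  set g2 : ℕ → ℂ := fun e => if e = 0 then 0 else -(1-x)*x^e with hg2
  have hFg : ∀ e : ℕ, FF n (p ^ e) = g1 e + g2 e := by
    intro e
    rcases eq_or_ne e 0 with rfl | he
    · rw [pow_zero, FF_one, hg1, hg2]
      simp
    · unfold FF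
      rw [cstar_prime_pow hp he n, jordan_prime_pow hp he]
      simp only [hg1, hg2, if_neg he, Nat.Prime.pow_dvd_iff_le_factorization hp hn, ← hv]
      by_cases hev : e ≤ v
      · rw [if_pos hev, if_pos hev]
        push_cast
        rw [hx, hy]
        field_simp
        have h1 : ((p:ℕ):ℂ) ^ (e*2) * ((p:ℕ):ℂ)⁻¹ ^ (e*2) = 1 := by rw [← mul_pow, mul_inv_cancel₀ hp0, one_pow]
        have h2 : ((p:ℕ):ℂ) ^ (e*2) * ((p:ℕ):ℂ)⁻¹ ^ e = ((p:ℕ):ℂ) ^ e := by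
          rw [show e*2 = e + e by ring, pow_add, mul_assoc, ← mul_pow, mul_inv_cancel₀ hp0, one_pow, mul_one]
        linear_combination (((p:ℕ):ℂ) ^ 2 - 1) * h1 - (((p:ℕ):ℂ) ^ 2 - 1) * h2
      · rw [if_neg hev, if_neg hev]
        push_cast
        rw [hx]
        field_simp
        have h1 : ((p:ℕ):ℂ) ^ (e*2) * ((p:ℕ):ℂ)⁻¹ ^ (e*2) = 1 := by rw [← mul_pow, mul_inv_cancel₀ hp0, one_pow]
        linear_combination (((p:ℕ):ℂ) ^ 2 - 1) * h1
  have hs1 : ∀ e ∉ Finset.range (v+1), g1 e = 0 := by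
    intro e he
    rw [Finset.mem_range, not_lt] at he
    have he0 : e ≠ 0 := by omega
    simp only [hg1, if_neg he0, if_neg (show ¬ e ≤ v by omega)]
  have hsum1 : Summable g1 := summable_of_ne_finset_zero hs1
  have hgeo : Summable (fun e : ℕ => x^e) := summable_geometric_of_norm_lt_one hxn
  have hsum2 : Summable g2 := by
    have : g2 = fun e => (-(1-x))*x^e + (if e = 0 then (1-x) else 0) := by
      funext e
      rcases eq_or_ne e 0 with rfl | he
      · simp only [hg2, if_pos rfl]
        simp
      · simp only [hg2, if_neg he]
        ring
    rw [this]
    apply Summable.add (hgeo.mul_left _)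
    apply summable_of_ne_finset_zero (s := {0})
    intro e he
    simp only [Finset.mem_singleton] at he
    rw [if_neg he]
  have ht2 : ∑' e, g2 e = -x := by
    have : g2 = fun e => (-(1-x))*x^e + (if e = 0 then (1-x) else 0) := by
      funext e
      rcases eq_or_ne e 0 with rfl | he
      · simp only [hg2, if_pos rfl]
        simp
      · simp only [hg2, if_neg he]
        ring
    rw [this, Summable.tsum_add (hgeo.mul_left _) (summable_of_ne_finset_zero (s := {0})
      (fun e he => if_neg (by simpa using he)))]
    rw [tsum_mul_left, tsum_geometric_of_norm_lt_one hxn,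
      tsum_eq_sum (s := {0}) (fun e he => if_neg (by simpa using he))]
    rw [Finset.sum_singleton, if_pos rfl]
    field_simp
    ring
  have ht1 : ∑' e, g1 e = ∑ a ∈ Finset.range (v+1), g1 a := tsum_eq_sum hs1
  have hQ : ∑ a ∈ Finset.range (v+1), g1 a
      = (1-x) * (∑ a ∈ Finset.range (v+1), y^a) + x := by
    rw [Finset.sum_range_succ', Finset.sum_range_succ']
    simp only [hg1, if_pos rfl]
    have : ∀ i ∈ Finset.range v, (if i + 1 = 0 then (1:ℂ) else if i + 1 ≤ v then (1-x)*y^(i+1) else 0)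
        = (1-x) * y^(i+1) := by
      intro i hi
      rw [if_neg (Nat.succ_ne_zero i), if_pos (Nat.succ_le_of_lt (Finset.mem_range.mp hi))]
    rw [Finset.sum_congr rfl this, mul_add, Finset.mul_sum]
    ring
  calc ∑' e, FF n (p ^ e) = ∑' e, (g1 e + g2 e) := by
        exact tsum_congr hFg
    _ = (∑' e, g1 e) + ∑' e, g2 e := Summable.tsum_add hsum1 hsum2
    _ = ((1-x) * (∑ a ∈ Finset.range (v+1), y^a) + x) + (-x) := by
        rw [ht1, ht2, hQ]
    _ = (1 - 1/(p:ℂ)^2) * ∑ a ∈ Finset.range (v + 1), (1/(p:ℂ))^a := by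
        rw [← hx, ← hy]
        ring


lemma one_sub_inv_sq_ne {p : ℕ} (hp : p.Prime) : (1:ℂ) - 1/(p:ℂ)^2 ≠ 0 := by
  intro h
  have hx : (1:ℂ) = 1/(p:ℂ)^2 := by linear_combination h
  have h2 : (2:ℝ) ≤ (p:ℝ) := by exact_mod_cast hp.two_le
  have hnorm : ‖(1:ℂ)/(p:ℂ)^2‖ < 1 := by
    rw [norm_div, norm_one, norm_pow, Complex.norm_natCast, div_lt_one (by nlinarith)]
    nlinarith
  rw [← hx] at hnorm
  simp at hnorm

lemma key (n : ℕ) (hn : n ≠ 0) :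
    riemannZeta 2 * ∑' q : ℕ, FF n q = ((ArithmeticFunction.sigma 1 n : ℕ) : ℂ) / (n : ℂ) := by
  classical
  set g : ℕ → ℂ := fun m => ∑ a ∈ Finset.range (n.factorization m + 1), (1/(m:ℂ))^a with hg
  have hprod : HasProd (fun p : Nat.Primes => ∑' e : ℕ, FF n ((p:ℕ) ^ e)) (∑' q, FF n q) :=
    EulerProduct.eulerProduct_hasProd (FF_one n) (fun {a b} hab => FF_mul n hab)
      (FF_summable_norm n hn) (FF_zero n)
  have hlocal : (fun p : Nat.Primes => ∑' e : ℕ, FF n ((p:ℕ) ^ e))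
      = fun p : Nat.Primes => (1 - 1/((p:ℕ):ℂ)^2) * g (p:ℕ) := by
    funext p
    exact FF_local n hn p.prop
  rw [hlocal] at hprod
  have hz : HasProd (fun p : Nat.Primes => (1 - ((p:ℕ):ℂ) ^ (-2:ℂ))⁻¹) (riemannZeta 2) :=
    riemannZeta_eulerProduct_hasProd (by norm_num)
  have hz2 : (fun p : Nat.Primes => (1 - ((p:ℕ):ℂ) ^ (-2:ℂ))⁻¹)
      = fun p : Nat.Primes => (1 - 1/((p:ℕ):ℂ)^2)⁻¹ := by
    funext p
    congr 2
    rw [Complex.cpow_neg, show ((2:ℂ)) = ((2:ℕ):ℂ) by norm_num, Complex.cpow_natCast]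
    rw [one_div]
  rw [hz2] at hz
  have hmul2 := hz.mul hprod
  have hsimp : (fun p : Nat.Primes => (1 - 1/((p:ℕ):ℂ)^2)⁻¹ * ((1 - 1/((p:ℕ):ℂ)^2) * g (p:ℕ)))
      = fun p : Nat.Primes => g (p:ℕ) := by
    funext p
    rw [← mul_assoc, inv_mul_cancel₀ (one_sub_inv_sq_ne p.prop), one_mul]
  rw [hsimp] at hmul2
  have hfin : HasProd (fun p : Nat.Primes => g (p:ℕ))
      (∏ p ∈ (n.primeFactors.subtype Nat.Prime), g ((p:ℕ))) := by
    apply hasProd_prod_of_ne_finset_one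
    intro p hp
    have hpf : (p:ℕ) ∉ n.primeFactors := fun hc => hp (Finset.mem_subtype.mpr hc)
    have h0 : n.factorization (p:ℕ) = 0 := by
      by_contra h
      exact hpf (Nat.mem_primeFactors.mpr ⟨p.prop, Nat.dvd_of_factorization_pos h, hn⟩)
    rw [hg]
    simp [h0]
  have huniq : riemannZeta 2 * ∑' q, FF n q
      = ∏ p ∈ (n.primeFactors.subtype Nat.Prime), g ((p:ℕ)) := hmul2.unique hfin
  rw [huniq, Finset.prod_subtype_of_mem _ (fun x hx => Nat.prime_of_mem_primeFactors hx)]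
  have hgm : ∀ m ∈ n.primeFactors,
      g m = ((ArithmeticFunction.sigma 1 (m ^ n.factorization m) : ℕ) : ℂ)
        / ((m ^ n.factorization m : ℕ) : ℂ) := by
    intro m hm
    have hmp : m.Prime := Nat.prime_of_mem_primeFactors hm
    have hm0 : (m:ℂ) ≠ 0 := Nat.cast_ne_zero.mpr hmp.pos.ne'
    set v := n.factorization m with hv
    rw [hg, ArithmeticFunction.sigma_one_apply_prime_pow hmp]
    rw [eq_div_iff (by push_cast; exact pow_ne_zero _ hm0)]
    push_cast
    rw [Finset.sum_mul]
    rw [← Finset.sum_range_reflect (fun k => (m:ℂ)^k) (v+1)]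
    refine Finset.sum_congr rfl fun a ha => ?_
    rw [Finset.mem_range] at ha
    have hav : a ≤ v := by omega
    have : v + 1 - 1 - a = v - a := by omega
    rw [this, pow_sub₀ _ hm0 hav]
    rw [one_div, inv_pow]
    ring
  rw [Finset.prod_congr rfl hgm, Finset.prod_div_distrib]
  have hnum : ∏ m ∈ n.primeFactors, ((ArithmeticFunction.sigma 1 (m ^ n.factorization m) : ℕ) : ℂ)
      = ((ArithmeticFunction.sigma 1 n : ℕ) : ℂ) := by
    rw [← Nat.cast_prod]
    congr 1
    have hsig := ArithmeticFunction.IsMultiplicative.multiplicative_factorization _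
      (ArithmeticFunction.isMultiplicative_sigma (k := 1)) hn
    rw [hsig, Nat.prod_factorization_eq_prod_primeFactors]
  have hden : ∏ m ∈ n.primeFactors, ((m ^ n.factorization m : ℕ) : ℂ) = (n : ℂ) := by
    rw [← Nat.cast_prod]
    congr 1
    exact dd_univ hn
  rw [hnum, hden]

end Aux16

theorem stmt16 (n : ℕ) (hn : 1 ≤ n) :
    Summable (fun q : ℕ+ => ((jordan 2 q : ℝ) : ℂ) * cstar q n / ((q : ℕ) : ℂ) ^ 4) ∧
    ((ArithmeticFunction.sigma 1 n : ℕ) : ℂ) / (n : ℂ)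
      = riemannZeta 2 * ∑' q : ℕ+, ((jordan 2 q : ℝ) : ℂ) * cstar q n / ((q : ℕ) : ℂ) ^ 4 := by
  have hn0 : n ≠ 0 := by omega
  have hsumN : Summable (Aux16.FF n) := (Aux16.FF_summable_norm n hn0).of_norm
  have hinj : Function.Injective (fun q : ℕ+ => (q : ℕ)) := fun a b h => PNat.coe_injective h
  have hsupp : Function.support (Aux16.FF n) ⊆ Set.range (fun q : ℕ+ => (q : ℕ)) := by
    intro x hx
    have hx0 : x ≠ 0 := fun h => hx (by rw [h]; exact Aux16.FF_zero n)
    exact ⟨⟨x, Nat.pos_of_ne_zero hx0⟩, rfl⟩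
  constructor
  · exact hsumN.comp_injective hinj
  · have ht : ∑' q : ℕ+, Aux16.FF n (q : ℕ) = ∑' q : ℕ, Aux16.FF n q :=
      Function.Injective.tsum_eq hinj hsupp
    show ((ArithmeticFunction.sigma 1 n : ℕ) : ℂ) / (n : ℂ)
      = riemannZeta 2 * ∑' q : ℕ+, Aux16.FF n (q : ℕ)
    rw [ht, Aux16.key n hn0]
end
end
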